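/- arXiv:1501.07687 — 14 statements merged into one kernel-verified Lean document; each statement's English description precedes it below -/
import Mathlib

section
/- Suppose every buyer's valuation is monotone (v_i(S) ≤ v_i(T) whenever S ⊆ T) and subadditive (v_i(S ∪ T) ≤ v_i(S) + v_i(T) for all sets S, T of items). Then every outcome (win, p, π) that satisfies the SPE characterization condition has social welfare at least OPT/(2m); in other words, the price of anarchy over such outcomes is at most 2m. -/
open Finset

/-- The set of items that buyer `i` wins among the first `j` items sold, where
`π` is the selling order (`π k` is the `(k+1)`-st item sold) and `win t` is the
buyer who wins item `t`. -/
def soldTo {N : Type*} [DecidableEq N] {m : ℕ} (win : Fin m → N)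
    (π : Equiv.Perm (Fin m)) (i : N) (j : ℕ) : Finset (Fin m) :=
  Finset.univ.filter fun t => ((π.symm t : ℕ) < j ∧ win t = i)

/-- Buyer `i`'s utility at the end of the sequential auction. -/
def util {N : Type*} [DecidableEq N] {m : ℕ} (v : N → Finset (Fin m) → ℝ)
    (win : Fin m → N) (p : Fin m → ℝ) (π : Equiv.Perm (Fin m)) (i : N) : ℝ :=
  v i (soldTo win π i m) - ∑ k ∈ soldTo win π i m, p k

/-- The SPE characterization condition: prices are nonnegative, every buyer has
nonnegative utility, and no buyer prefers snatching an item `π k` (after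
winning exactly his equilibrium items among the first `k` items sold) to his
equilibrium utility. -/
def SPECond {N : Type*} [DecidableEq N] {m : ℕ} (v : N → Finset (Fin m) → ℝ)
    (win : Fin m → N) (p : Fin m → ℝ) (π : Equiv.Perm (Fin m)) : Prop :=
  (∀ j, 0 ≤ p j) ∧
  (∀ i, 0 ≤ util v win p π i) ∧
  ∀ (i : N) (k : Fin m),
    v i (insert (π k) (soldTo win π i (k : ℕ))) - p (π k)
        - ∑ t ∈ soldTo win π i (k : ℕ), p t ≤ util v win p π i

lemma val_le_sum_singletons {N : Type*} {m : ℕ} (v : N → Finset (Fin m) → ℝ)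
    (hempty : ∀ i, v i ∅ = 0)
    (hsub : ∀ i S T, v i (S ∪ T) ≤ v i S + v i T) (i : N) (S : Finset (Fin m)) :
    v i S ≤ ∑ t ∈ S, v i {t} := by
  induction S using Finset.induction with
  | empty => simp [hempty]
  | @insert a s h ih =>
      rw [Finset.sum_insert h]
      calc v i (insert a s) = v i ({a} ∪ s) := by rw [Finset.insert_eq]
        _ ≤ v i {a} + v i s := hsub i _ _
        _ ≤ _ := by linarith

/-- For monotone subadditive valuations, every outcome satisfying the SPE
characterization condition has social welfare at least `OPT / (2m)`:
the price of anarchy over such outcomes is at most `2m`. -/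
theorem poa_subadditive_le_two_m {N : Type*} [Fintype N] [DecidableEq N]
    {m : ℕ} (hm : 1 ≤ m)
    (v : N → Finset (Fin m) → ℝ)
    (hempty : ∀ i, v i ∅ = 0)
    (hmono : ∀ i S T, S ⊆ T → v i S ≤ v i T)
    (hsub : ∀ i S T, v i (S ∪ T) ≤ v i S + v i T)
    (win : Fin m → N) (p : Fin m → ℝ) (π : Equiv.Perm (Fin m))
    (hspe : SPECond v win p π) :
    ∀ A : Fin m → N,
      ∑ i, v i (Finset.univ.filter fun j => A j = i)
        ≤ 2 * (m : ℝ) * ∑ i, v i (soldTo win π i m) := by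
  obtain ⟨hp, hu, hdev⟩ := hspe
  intro A
  set X : N → Finset (Fin m) := fun i => soldTo win π i m with hX
  have hXmem : ∀ i t, t ∈ X i ↔ win t = i := by
    intro i t; simp [hX, soldTo, (π.symm t).isLt]
  -- key single-item bound
  have hsingle : ∀ i t, v i {t} ≤ v i (X i) + p t := by
    intro i t
    have hk := hdev i (π.symm t)
    rw [Equiv.apply_symm_apply] at hk
    have hsubk : soldTo win π i ((π.symm t : ℕ)) ⊆ X i := by
      intro x hx
      simp only [soldTo, Finset.mem_filter, Finset.mem_univ, true_and] at hx
      exact (hXmem i x).2 hx.2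
    have hsumle : ∑ t' ∈ soldTo win π i ((π.symm t : ℕ)), p t'
        ≤ ∑ t' ∈ X i, p t' :=
      Finset.sum_le_sum_of_subset_of_nonneg hsubk (fun x _ _ => hp x)
    have h1 : v i {t} ≤ v i (insert t (soldTo win π i ((π.symm t : ℕ)))) :=
      hmono i _ _ (by simp)
    have hutil : util v win p π i = v i (X i) - ∑ t' ∈ X i, p t' := rfl
    rw [hutil] at hk
    linarith
  have hXnn : ∀ i, 0 ≤ v i (X i) := by
    intro i
    have h1 := hu i
    have h2 : 0 ≤ ∑ t' ∈ X i, p t' := Finset.sum_nonneg fun x _ => hp x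
    have hutil : util v win p π i = v i (X i) - ∑ t' ∈ X i, p t' := rfl
    rw [hutil] at h1; linarith
  have hib : ∀ i, v i (Finset.univ.filter fun j => A j = i)
      ≤ (m : ℝ) * v i (X i) + ∑ t ∈ Finset.univ.filter (fun j => A j = i), p t := by
    intro i
    calc v i (Finset.univ.filter fun j => A j = i)
        ≤ ∑ t ∈ Finset.univ.filter (fun j => A j = i), v i {t} :=
          val_le_sum_singletons v hempty hsub i _
      _ ≤ ∑ t ∈ Finset.univ.filter (fun j => A j = i), (v i (X i) + p t) :=
          Finset.sum_le_sum (fun t _ => hsingle i t)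
      _ = ((Finset.univ.filter (fun j => A j = i)).card : ℝ) * v i (X i)
            + ∑ t ∈ Finset.univ.filter (fun j => A j = i), p t := by
          rw [Finset.sum_add_distrib, Finset.sum_const, nsmul_eq_mul]
      _ ≤ (m : ℝ) * v i (X i) + ∑ t ∈ Finset.univ.filter (fun j => A j = i), p t := by
          have hc : ((Finset.univ.filter (fun j => A j = i)).card : ℝ) ≤ (m : ℝ) := by
            have := Finset.card_filter_le (Finset.univ : Finset (Fin m)) (fun j => A j = i)
            simp only [Finset.card_univ, Fintype.card_fin] at this
            exact_mod_cast this
          have := mul_le_mul_of_nonneg_right hc (hXnn i)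
          linarith
  have hfib : ∑ i, ∑ t ∈ Finset.univ.filter (fun j => A j = i), p t = ∑ t, p t :=
    Finset.sum_fiberwise _ _ _
  have hfib2 : ∑ t, p t = ∑ i, ∑ t ∈ X i, p t := by
    rw [← Finset.sum_fiberwise Finset.univ win p]
    apply Finset.sum_congr rfl
    intro i _
    apply Finset.sum_congr _ (fun _ _ => rfl)
    ext t
    simp [hXmem i t]
  have hrev : ∑ t, p t ≤ ∑ i, v i (X i) := by
    rw [hfib2]
    apply Finset.sum_le_sum
    intro i _
    have h1 := hu i
    have hutil : util v win p π i = v i (X i) - ∑ t' ∈ X i, p t' := rfl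
    rw [hutil] at h1; linarith
  have hSWnn : 0 ≤ ∑ i, v i (X i) := Finset.sum_nonneg fun i _ => hXnn i
  have hm' : (1 : ℝ) ≤ (m : ℝ) := by exact_mod_cast hm
  calc ∑ i, v i (Finset.univ.filter fun j => A j = i)
      ≤ ∑ i, ((m : ℝ) * v i (X i) + ∑ t ∈ Finset.univ.filter (fun j => A j = i), p t) :=
        Finset.sum_le_sum (fun i _ => hib i)
    _ = (m : ℝ) * ∑ i, v i (X i) + ∑ t, p t := by
        rw [Finset.sum_add_distrib, Finset.mul_sum, hfib]
    _ ≤ 2 * (m : ℝ) * ∑ i, v i (X i) := by nlinarith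
end

section
/- Let m ≥ 1 and consider the sequential-auction market with m items and two additive buyers A and B, where A values every item at m and B values every item at 1 (so v_A(S) = m·|S| and v_B(S) = |S|). Then for any selling order π, the outcome in which buyer B wins the first m−1 items sold and buyer A wins the last item sold, each item at price 1, satisfies the SPE characterization condition; its social welfare is 2m − 1, while the optimal social welfare OPT equals m². In particular, the price of anarchy over outcomes satisfying the condition is at least m²/(2m−1), which is Ω(m). -/
open Finset

lemma card_filter_symm {m : ℕ} (π : Equiv.Perm (Fin m)) (R : ℕ → Prop) [DecidablePred R] :
    (univ.filter fun t : Fin m => R (π.symm t : ℕ)).card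
      = ((Finset.range m).filter R).card := by
  apply Finset.card_bij (fun t _ => ((π.symm t : Fin m) : ℕ))
  · intro a ha
    simp only [mem_filter, mem_univ, true_and] at ha ⊢
    exact ⟨mem_range.2 (π.symm a).isLt, ha⟩
  · intro a ha b hb h
    exact π.symm.injective (Fin.val_injective h)
  · intro b hb
    simp only [mem_filter, mem_range] at hb
    exact ⟨π ⟨b, hb.1⟩, by simp [hb.2]⟩

/-- Two additive buyers: buyer `0` (buyer A) values every item at `m`, buyer
`1` (buyer B) values every item at `1`.  For any selling order, the outcome in
which B wins the first `m - 1` items sold and A wins the last item sold, every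
item at price `1`, satisfies the SPE characterization condition; its social
welfare is `2m - 1` while the optimal social welfare is `m ^ 2`.  Hence the
price of anarchy over such outcomes is at least `m ^ 2 / (2m - 1) = Ω(m)`. -/
theorem poa_additive_lower_bound (m : ℕ) (hm : 1 ≤ m)
    (v : Fin 2 → Finset (Fin m) → ℝ)
    (hv : ∀ i S, v i S = ∑ _j ∈ S, (if i = 0 then (m : ℝ) else 1))
    (π : Equiv.Perm (Fin m))
    (win : Fin m → Fin 2)
    (hwin : ∀ j, win j = if (π.symm j : ℕ) = m - 1 then 0 else 1)
    (p : Fin m → ℝ) (hp : ∀ j, p j = 1) :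
    SPECond v win p π ∧
    (∑ i, v i (soldTo win π i m)) = 2 * (m : ℝ) - 1 ∧
    (∀ A : Fin m → Fin 2,
      ∑ i, v i (Finset.univ.filter fun j => A j = i) ≤ (m : ℝ) ^ 2) ∧
    (∃ A : Fin m → Fin 2,
      ∑ i, v i (Finset.univ.filter fun j => A j = i) = (m : ℝ) ^ 2) := by
  have hvcard : ∀ i S, v i S = (S.card : ℝ) * (if i = 0 then (m : ℝ) else 1) := by
    intro i S; rw [hv]; simp [mul_comm]
  have hsum : ∀ S : Finset (Fin m), ∑ k ∈ S, p k = (S.card : ℝ) := by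
    intro S; simp [hp]
  have h0 : ∀ j, soldTo win π 0 j
      = univ.filter (fun t => ((π.symm t : ℕ) < j ∧ (π.symm t : ℕ) = m - 1)) := by
    intro j; ext t
    simp only [soldTo, mem_filter, mem_univ, true_and, hwin t]
    by_cases h : (π.symm t : ℕ) = m - 1 <;> simp [h]
  have h1 : ∀ j, soldTo win π 1 j
      = univ.filter (fun t => ((π.symm t : ℕ) < j ∧ ¬ (π.symm t : ℕ) = m - 1)) := by
    intro j; ext t
    simp only [soldTo, mem_filter, mem_univ, true_and, hwin t]
    by_cases h : (π.symm t : ℕ) = m - 1 <;> simp [h]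
  have c0m : (soldTo win π 0 m).card = 1 := by
    rw [h0 m, card_filter_symm π (fun a => a < m ∧ a = m - 1)]
    have : (range m).filter (fun a => a < m ∧ a = m - 1) = {m - 1} := by
      ext a; simp only [mem_filter, mem_range, mem_singleton]; omega
    rw [this, card_singleton]
  have c1 : ∀ j, j ≤ m → (soldTo win π 1 j).card = min j (m - 1) := by
    intro j hj
    rw [h1 j, card_filter_symm π (fun a => a < j ∧ ¬ a = m - 1)]
    have : (range m).filter (fun a => a < j ∧ ¬ a = m - 1) = range (min j (m - 1)) := by
      ext a; simp only [mem_filter, mem_range]; omega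
    rw [this, card_range]
  have hu0 : util v win p π 0 = (m : ℝ) - 1 := by
    rw [util, hvcard, hsum, c0m]; norm_num
  have hu1 : util v win p π 1 = 0 := by
    rw [util, hvcard, hsum]; norm_num
  have hm1 : (1 : ℝ) ≤ (m : ℝ) := by exact_mod_cast hm
  refine ⟨⟨fun j => by rw [hp]; norm_num, ?_, ?_⟩, ?_, ?_, ?_⟩
  · intro i
    have hi : i = 0 ∨ i = 1 := by omega
    rcases hi with hi | hi <;> subst hi
    · rw [hu0]; linarith
    · rw [hu1]
  · intro i k
    have hk := k.isLt
    have hi : i = 0 ∨ i = 1 := by omega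
    rcases hi with hi | hi <;> subst hi
    · have he : soldTo win π 0 (k : ℕ) = ∅ := by
        rw [h0]; ext t; simp only [mem_filter, mem_univ, true_and, notMem_empty, iff_false]
        omega
      rw [hu0, he, hvcard, hp]
      simp only [LawfulSingleton.insert_empty_eq, card_singleton, sum_empty, Nat.cast_one, one_mul]
      norm_num
    · have hnm : π k ∉ soldTo win π 1 (k : ℕ) := by
        simp [soldTo]
      have hcT : (soldTo win π 1 (k : ℕ)).card = (k : ℕ) := by
        rw [c1 _ (le_of_lt hk)]; omega
      rw [hu1, hvcard, hp, hsum, card_insert_of_notMem hnm, hcT]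
      norm_num
  · rw [Fin.sum_univ_two, hvcard, hvcard, c0m, c1 m le_rfl]
    have : min m (m - 1) = m - 1 := by omega
    rw [this]
    have : ((m - 1 : ℕ) : ℝ) = (m : ℝ) - 1 := by
      push_cast [hm]; ring
    rw [this]
    norm_num; ring
  · intro A
    rw [Fin.sum_univ_two, hvcard, hvcard]
    have hpart : (univ.filter fun j => A j = 0).card
        + (univ.filter fun j => A j = 1).card = m := by
      have he : (univ.filter fun j => A j = 1) = (univ.filter fun j => ¬ A j = 0) := by
        ext t; simp only [mem_filter, mem_univ, true_and]
        have := (A t).isLt; omega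
      rw [he, Finset.card_filter_add_card_filter_not, card_univ, Fintype.card_fin]
    set a := ((univ.filter fun j => A j = 0).card : ℝ) with ha
    set b := ((univ.filter fun j => A j = 1).card : ℝ) with hb
    have hab : a + b = (m : ℝ) := by rw [ha, hb]; exact_mod_cast hpart
    have ha0 : 0 ≤ a := by positivity
    have hb0 : 0 ≤ b := by positivity
    norm_num
    nlinarith [mul_nonneg (sub_nonneg.2 (by linarith : a ≤ (m:ℝ))) (sub_nonneg.2 hm1)]
  · refine ⟨fun _ => 0, ?_⟩
    rw [Fin.sum_univ_two, hvcard, hvcard]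
    have h0' : (univ.filter fun j : Fin m => (0 : Fin 2) = 0) = univ := by simp
    have h1' : (univ.filter fun j : Fin m => (0 : Fin 2) = 1) = ∅ := by
      ext t; simp
    rw [h0', h1', card_univ, Fintype.card_fin]
    simp; ring
end

section
/- Let m ≥ 1 and 0 < ε ≤ 1, and consider the sequential-auction market with items 1,…,m and two additive buyers A and B, where A values every item at m, and B values each item j ≤ m−1 at 1 and values item m at ε. Then the outcome in which items are sold in the order 1,…,m, buyer B wins items 1,…,m−1 and buyer A wins item m, with every price equal to ε, satisfies the SPE characterization condition; its revenue is mε. -/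
open Finset

/-- Items `0, …, m-1` stand for items `1, …, m`.  Buyer `0` (buyer A) is
additive and values every item at `m`; buyer `1` (buyer B) is additive and
values each of the first `m - 1` items at `1` and the last item at `ε`.  The
outcome selling the items in order `1, …, m`, where B wins items `1, …, m-1`
and A wins item `m`, with every price equal to `ε`, satisfies the SPE
characterization condition; its revenue is `m * ε`. -/
theorem low_revenue_additive_SPE (m : ℕ) (hm : 1 ≤ m) (ε : ℝ)
    (hε0 : 0 < ε) (hε1 : ε ≤ 1)
    (v : Fin 2 → Finset (Fin m) → ℝ)
    (hv : ∀ i S, v i S =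
      ∑ j ∈ S, (if i = 0 then (m : ℝ) else if (j : ℕ) = m - 1 then ε else 1)) :
    SPECond v (fun j => if (j : ℕ) = m - 1 then (0 : Fin 2) else 1)
        (fun _ => ε) (Equiv.refl (Fin m)) ∧
    (∑ _j : Fin m, ε) = m * ε := by
  set win : Fin m → Fin 2 := fun j => if (j : ℕ) = m - 1 then (0 : Fin 2) else 1 with hwin
  set π : Equiv.Perm (Fin m) := Equiv.refl (Fin m) with hπ
  have hL : m - 1 < m := by omega
  set L : Fin m := ⟨m - 1, hL⟩ with hLdef
  have hwin0 : ∀ t : Fin m, win t = 0 ↔ (t : ℕ) = m - 1 := by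
    intro t
    simp only [hwin]
    split <;> simp_all
  have hwin1 : ∀ t : Fin m, win t = 1 ↔ (t : ℕ) ≠ m - 1 := by
    intro t
    simp only [hwin]
    split <;> simp_all
  -- the final sets
  have S0 : soldTo win π 0 m = {L} := by
    ext t
    simp only [soldTo, hπ, Equiv.refl_symm, Equiv.refl_apply, mem_filter, mem_univ, true_and,
      mem_singleton, hwin0]
    constructor
    · rintro ⟨-, h⟩; exact Fin.ext h
    · rintro rfl; exact ⟨hL, rfl⟩
  have S1 : soldTo win π 1 m = univ.filter fun t : Fin m => (t : ℕ) ≠ m - 1 := by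
    ext t
    simp only [soldTo, hπ, Equiv.refl_symm, Equiv.refl_apply, mem_filter, mem_univ, true_and,
      hwin1]
    exact ⟨fun h => h.2, fun h => ⟨t.isLt, h⟩⟩
  have cardS1 : (univ.filter fun t : Fin m => (t : ℕ) ≠ m - 1).card = m - 1 := by
    have : (univ.filter fun t : Fin m => (t : ℕ) ≠ m - 1) = univ.erase L := by
      ext t
      simp only [mem_filter, mem_univ, true_and, mem_erase, and_true]
      constructor
      · intro h ht; exact h (by rw [ht])
      · intro h ht; exact h (Fin.ext ht)
    rw [this, card_erase_of_mem (mem_univ _), card_univ, Fintype.card_fin]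
  -- utilities
  have u0 : util v win (fun _ => ε) π 0 = (m : ℝ) - ε := by
    rw [util, S0, hv]
    simp
  have u1 : util v win (fun _ => ε) π 1 = ((m : ℝ) - 1) * (1 - ε) := by
    rw [util, S1, hv]
    rw [sum_congr rfl (fun t ht => by
      simp only [mem_filter] at ht
      simp [ht.2] : ∀ t ∈ univ.filter fun t : Fin m => (t : ℕ) ≠ m - 1, _ = (1 : ℝ))]
    rw [sum_const, sum_const, cardS1, nsmul_eq_mul, nsmul_eq_mul,
      Nat.cast_sub hm, Nat.cast_one]
    ring
  -- sets after k items
  have E0 : ∀ k : Fin m, soldTo win π 0 (k : ℕ) = ∅ := by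
    intro k
    ext t
    simp only [soldTo, hπ, Equiv.refl_symm, Equiv.refl_apply, mem_filter, mem_univ, true_and,
      notMem_empty, iff_false, not_and, hwin0]
    intro h ht
    have := k.isLt
    omega
  have E1 : ∀ k : Fin m, soldTo win π 1 (k : ℕ) = Finset.Iio k := by
    intro k
    ext t
    simp only [soldTo, hπ, Equiv.refl_symm, Equiv.refl_apply, mem_filter, mem_univ, true_and,
      Finset.mem_Iio, hwin1, Fin.lt_def]
    have := k.isLt
    constructor
    · exact fun h => h.1
    · intro h; exact ⟨h, by omega⟩
  refine ⟨⟨fun _ => le_of_lt hε0, ?_, ?_⟩, ?_⟩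
  · intro i
    fin_cases i
    · show 0 ≤ util v win (fun _ => ε) π 0
      rw [u0]
      have : (1 : ℝ) ≤ (m : ℝ) := by exact_mod_cast hm
      linarith
    · show 0 ≤ util v win (fun _ => ε) π 1
      rw [u1]
      have : (1 : ℝ) ≤ (m : ℝ) := by exact_mod_cast hm
      nlinarith
  · intro i k
    fin_cases i
    · show v 0 (insert (π k) (soldTo win π 0 (k : ℕ))) - ε
          - ∑ _t ∈ soldTo win π 0 (k : ℕ), ε ≤ util v win (fun _ => ε) π 0
      rw [E0, u0, hv]
      simp only [hπ, Equiv.refl_apply, insert_empty_eq, sum_singleton, if_pos rfl,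
        sum_empty]
      norm_num
    · show v 1 (insert (π k) (soldTo win π 1 (k : ℕ))) - ε
          - ∑ _t ∈ soldTo win π 1 (k : ℕ), ε ≤ util v win (fun _ => ε) π 1
      rw [E1, u1, hv]
      have hknot : k ∉ Finset.Iio k := by simp
      simp only [hπ, Equiv.refl_apply]
      rw [sum_insert hknot]
      have hterm : ∀ t ∈ Finset.Iio k, (if (1 : Fin 2) = 0 then (m : ℝ)
          else if (t : ℕ) = m - 1 then ε else 1) = (1 : ℝ) := by
        intro t ht
        rw [Finset.mem_Iio, Fin.lt_def] at ht
        have := k.isLt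
        have : (t : ℕ) ≠ m - 1 := by omega
        simp [this]
      rw [sum_congr rfl hterm, sum_const, sum_const, Fin.card_Iio, nsmul_eq_mul,
        nsmul_eq_mul, mul_one]
      have hk : (k : ℕ) < m := k.isLt
      have hkR : ((k : ℕ) : ℝ) ≤ (m : ℝ) - 1 := by
        have : (k : ℕ) ≤ m - 1 := by omega
        have h2 : (((k : ℕ) : ℝ)) ≤ ((m - 1 : ℕ) : ℝ) := by exact_mod_cast this
        rwa [Nat.cast_sub hm, Nat.cast_one] at h2
      by_cases hkm : (k : ℕ) = m - 1
      · simp only [hkm, if_pos rfl, if_neg (one_ne_zero (α := Fin 2)), if_true]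
        rw [Nat.cast_sub hm, Nat.cast_one]
        ring_nf
        linarith
      · simp only [if_neg (one_ne_zero (α := Fin 2)), if_neg hkm]
        have hk2 : (k : ℕ) + 1 ≤ m - 1 := by omega
        have hk2R : ((k : ℕ) : ℝ) + 1 ≤ (m : ℝ) - 1 := by
          have := (Nat.cast_le (α := ℝ)).2 hk2
          push_cast [Nat.cast_sub hm] at this
          linarith
        nlinarith [mul_le_mul_of_nonneg_right hk2R (by linarith : (0:ℝ) ≤ 1 - ε)]
  · rw [sum_const, card_univ, Fintype.card_fin, nsmul_eq_mul]
end

section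
/- Let m ≥ 1 and 0 < ε ≤ 1, and consider the market with items 1,…,m and two additive buyers A and B, where A values every item at m, and B values each item j ≤ m−1 at 1 and values item m at ε. Then every (additive) Walrasian equilibrium of this market has revenue Σ_j p_j ≥ m − 1 + ε. Combined with the existence of an outcome satisfying the SPE characterization condition whose revenue is mε, this shows the ratio of sequential-auction revenue to Walrasian revenue can be made arbitrarily small. -/
open Finset

/-- A Walrasian equilibrium for additive buyers with per-item values `val`:
prices are nonnegative, each item is sold to a buyer valuing it at least its
price, and no other buyer values it strictly more than its price. -/
def AddWE {N M : Type*} (val : N → M → ℝ) (win : M → N) (p : M → ℝ) : Prop :=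
  (∀ j, 0 ≤ p j) ∧
  (∀ j, p j ≤ val (win j) j) ∧
  ∀ (j : M) (i : N), i ≠ win j → val i j ≤ p j

/-- Items `0, …, m-1` stand for items `1, …, m`.  Buyer `0` (buyer A) is
additive and values every item at `m`; buyer `1` (buyer B) is additive and
values each of the first `m - 1` items at `1` and the last item at `ε`.  Every
Walrasian equilibrium of this market has revenue at least `m - 1 + ε`, while
there is an outcome satisfying the SPE characterization condition whose revenue
is only `m * ε`; hence the ratio of the sequential-auction revenue to the
Walrasian revenue is vanishing. -/
theorem walrasian_vs_spe_revenue (m : ℕ) (hm : 1 ≤ m) (ε : ℝ)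
    (hε0 : 0 < ε) (hε1 : ε ≤ 1)
    (val : Fin 2 → Fin m → ℝ)
    (hval : ∀ i j, val i j =
      if i = 0 then (m : ℝ) else if (j : ℕ) = m - 1 then ε else 1)
    (v : Fin 2 → Finset (Fin m) → ℝ)
    (hv : ∀ i S, v i S = ∑ j ∈ S, val i j) :
    (∀ (win : Fin m → Fin 2) (p : Fin m → ℝ),
        AddWE val win p → (m : ℝ) - 1 + ε ≤ ∑ j, p j) ∧
    (∃ (win : Fin m → Fin 2) (p : Fin m → ℝ) (π : Equiv.Perm (Fin m)),
        SPECond v win p π ∧ (∑ j, p j) = m * ε) := by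
  have hm1 : (1:ℝ) ≤ (m:ℝ) := by exact_mod_cast hm
  set j0 : Fin m := ⟨m - 1, by omega⟩ with hj0
  have hvalj0 : ∀ t : Fin m, (t:ℕ) = m - 1 ↔ t = j0 := by
    intro t; constructor
    · intro h; exact Fin.ext h
    · intro h; subst h; rfl
  constructor
  · rintro win p ⟨hp0, hp1, hp2⟩
    have key : ∀ j : Fin m, (if (j:ℕ) = m - 1 then ε else 1) ≤ p j := by
      intro j
      by_cases h : win j = 0
      · have h1 : (1 : Fin 2) ≠ win j := by rw [h]; decide
        have := hp2 j 1 h1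
        rw [hval] at this
        simpa using this
      · have h0 : (0 : Fin 2) ≠ win j := fun hc => h hc.symm
        have := hp2 j 0 h0
        rw [hval] at this
        norm_num at this
        refine le_trans ?_ this
        split <;> linarith
    calc (m:ℝ) - 1 + ε = ∑ j : Fin m, (if (j:ℕ) = m - 1 then ε else 1) := by
          have : ∀ j : Fin m, (if (j:ℕ) = m - 1 then ε else 1)
              = (if j = j0 then ε - 1 else 0) + 1 := by
            intro j
            by_cases hj : j = j0
            · rw [if_pos ((hvalj0 j).mpr hj), if_pos hj]; ring
            · rw [if_neg (fun h => hj ((hvalj0 j).mp h)), if_neg hj]; ring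
          rw [Finset.sum_congr rfl fun j _ => this j, Finset.sum_add_distrib,
            Finset.sum_ite_eq' Finset.univ j0 (fun _ => ε - 1)]
          simp
          ring
      _ ≤ ∑ j, p j := Finset.sum_le_sum fun j _ => key j
  · set win : Fin m → Fin 2 := fun t => if t = j0 then 0 else 1 with hwin
    set p : Fin m → ℝ := fun _ => ε with hp
    set π : Equiv.Perm (Fin m) := Equiv.refl _ with hπ
    have hwin0 : ∀ t, win t = 0 ↔ t = j0 := by
      intro t; by_cases h : t = j0 <;> simp [hwin, h]
    have hwin1 : ∀ t, win t = 1 ↔ t ≠ j0 := by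
      intro t; by_cases h : t = j0 <;> simp [hwin, h]
    have hcast : ((m - 1 : ℕ) : ℝ) = (m : ℝ) - 1 := by
      rw [Nat.cast_sub hm]; norm_num
    have hsum1 : ∀ S : Finset (Fin m), j0 ∉ S →
        (∑ t ∈ S, val 1 t) = (S.card : ℝ) := by
      intro S hS
      rw [Finset.sum_congr rfl (fun t ht => ?_), Finset.sum_const,
        nsmul_eq_mul, mul_one]
      rw [hval]
      have h1 : (t : ℕ) ≠ m - 1 := fun h => hS (((hvalj0 t).mp h) ▸ ht)
      simp [h1]
    have hA2 : ∀ k : Fin m, soldTo win π 0 (k : ℕ) = ∅ := by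
      intro k
      ext t
      simp only [soldTo, hπ, Equiv.refl_symm, Equiv.refl_apply, Finset.mem_filter,
        Finset.mem_univ, true_and, Finset.notMem_empty, iff_false, not_and]
      intro h1 h2
      have := (hwin0 t).mp h2
      subst this
      have := k.isLt
      simp only [hj0] at h1
      omega
    have hA1 : soldTo win π 0 m = {j0} := by
      ext t
      simp only [soldTo, hπ, Equiv.refl_symm, Equiv.refl_apply, Finset.mem_filter,
        Finset.mem_univ, true_and, Finset.mem_singleton]
      constructor
      · rintro ⟨_, h2⟩; exact (hwin0 t).mp h2
      · intro h; exact ⟨t.isLt, (hwin0 t).mpr h⟩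
    have hB2 : ∀ k : Fin m, soldTo win π 1 (k : ℕ) = Finset.Iio k := by
      intro k
      ext t
      simp only [soldTo, hπ, Equiv.refl_symm, Equiv.refl_apply, Finset.mem_filter,
        Finset.mem_univ, true_and, Finset.mem_Iio, Fin.lt_def]
      constructor
      · rintro ⟨h1, _⟩; exact h1
      · intro h1
        refine ⟨h1, (hwin1 t).mpr fun ht => ?_⟩
        subst ht
        have := k.isLt
        simp only [hj0] at h1
        omega
    have hB1 : soldTo win π 1 m = Finset.univ.erase j0 := by
      ext t
      simp only [soldTo, hπ, Equiv.refl_symm, Equiv.refl_apply, Finset.mem_filter,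
        Finset.mem_univ, true_and, Finset.mem_erase, and_true]
      constructor
      · rintro ⟨_, h2⟩; exact (hwin1 t).mp h2
      · intro h; exact ⟨t.isLt, (hwin1 t).mpr h⟩
    have hj0ne : j0 ∉ Finset.univ.erase j0 := fun h => (Finset.mem_erase.mp h).1 rfl
    have hcarde : (Finset.univ.erase j0).card = m - 1 := by
      rw [Finset.card_erase_of_mem (Finset.mem_univ _), Finset.card_univ,
        Fintype.card_fin]
    have hutil0 : util v win p π 0 = (m : ℝ) - ε := by
      rw [util, hA1, hv, Finset.sum_singleton, Finset.sum_singleton, hval]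
      simp [hp]
    have hutil1 : util v win p π 1 = ((m : ℝ) - 1) * (1 - ε) := by
      rw [util, hB1, hv, hsum1 _ hj0ne, hcarde, hcast, Finset.sum_const,
        nsmul_eq_mul, hcarde, hcast]
      ring
    refine ⟨win, p, π, ⟨fun j => le_of_lt hε0, ?_, ?_⟩, ?_⟩
    · intro i
      by_cases hi : i = 0
      · subst hi; rw [hutil0]; linarith
      · rw [Fin.eq_one_of_ne_zero i hi, hutil1]; nlinarith
    · intro i k
      by_cases hi : i = 0
      · subst hi
        rw [hA2 k, hutil0]
        simp only [Finset.sum_empty, hπ, Equiv.refl_apply, LawfulSingleton.insert_empty_eq]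
        rw [hv, Finset.sum_singleton, hval]
        simp [hp]
      · rw [Fin.eq_one_of_ne_zero i hi, hB2 k, hutil1]
        have hknot : k ∉ Finset.Iio k := by simp
        have hcardI : (Finset.Iio k).card = (k : ℕ) := by simp
        have hsp : (∑ t ∈ Finset.Iio k, p t) = (k : ℕ) * ε := by
          rw [Finset.sum_const, hcardI, nsmul_eq_mul]
        simp only [hπ, Equiv.refl_apply]
        rw [hv, Finset.sum_insert hknot, hsp]
        by_cases hk : k = j0
        · subst hk
          have : (∑ t ∈ Finset.Iio j0, val 1 t) = ((Finset.Iio j0).card : ℝ) :=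
            hsum1 _ (by simp)
          rw [this, hcardI, hval]
          have : ((j0 : ℕ) : ℝ) = (m : ℝ) - 1 := by simp only [hj0]; exact hcast
          rw [this]
          have h10 : (1 : Fin 2) ≠ 0 := by decide
          rw [if_neg h10, if_pos (show ((j0 : ℕ) = m - 1) from rfl)]
          have hpj : p j0 = ε := rfl
          rw [hpj]
          apply le_of_eq
          ring
        · have hj0not : j0 ∉ Finset.Iio k := by
            simp only [Finset.mem_Iio, Fin.lt_def, hj0, not_lt]
            have := k.isLt; omega
          have : (∑ t ∈ Finset.Iio k, val 1 t) = ((Finset.Iio k).card : ℝ) :=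
            hsum1 _ hj0not
          rw [this, hcardI, hval]
          have hkm : (k : ℕ) ≠ m - 1 := fun h => hk (Fin.ext h)
          have hklt : ((k : ℕ) : ℝ) + 1 ≤ (m : ℝ) - 1 := by
            have h1 : (k : ℕ) + 1 ≤ m - 1 := by have := k.isLt; omega
            have := hcast ▸ (Nat.cast_le.mpr h1 : ((k:ℕ)+1 : ℕ) ≤ ((m-1:ℕ):ℝ))
            push_cast at this ⊢
            linarith [this]
          have h10 : (1 : Fin 2) ≠ 0 := by decide
          rw [if_neg h10, if_neg hkm]
          have hpk : p k = ε := rfl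
          rw [hpk]
          nlinarith
    · have : ∀ j : Fin m, p j = ε := fun _ => rfl
      rw [Finset.sum_congr rfl fun j _ => this j, Finset.sum_const,
        Finset.card_univ, Fintype.card_fin, nsmul_eq_mul]
end

section
/- Suppose every buyer's valuation is monotone (v_i(S) ≤ v_i(T) whenever S ⊆ T), satisfies v_i(∅) = 0, and is non-singleton, meaning v_i({j}) = 0 for every buyer i and every item j. Then for any fixed buyer i₀ and any selling order π, the outcome in which buyer i₀ wins every item and every price is zero satisfies the SPE characterization condition. -/
open Finset

/-- If all buyers have monotone, normalized, non-singleton valuations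
(`v i {j} = 0` for every buyer `i` and item `j`), then for any buyer `i₀` and
any selling order the outcome in which `i₀` wins every item at price zero
satisfies the SPE characterization condition. -/
theorem non_singleton_zero_price_SPE {N : Type*} [Fintype N] [DecidableEq N]
    {m : ℕ} (hm : 1 ≤ m)
    (v : N → Finset (Fin m) → ℝ)
    (hempty : ∀ i, v i ∅ = 0)
    (hmono : ∀ i S T, S ⊆ T → v i S ≤ v i T)
    (hsingle : ∀ (i : N) (j : Fin m), v i {j} = 0)
    (i₀ : N) (π : Equiv.Perm (Fin m)) :
    SPECond v (fun _ => i₀) (fun _ => 0) π := by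
  have hsub : ∀ (i : N) (j : ℕ), soldTo (fun _ => i₀) π i j ⊆ Finset.univ :=
    fun _ _ => Finset.subset_univ _
  have hne : ∀ (i : N), i ≠ i₀ → ∀ j, soldTo (fun _ => i₀) π i j = ∅ := by
    intro i hi j
    simp [soldTo, Finset.filter_eq_empty_iff]
    intro t h
    exact fun h' => hi h'.symm
  have hutil : ∀ i, util v (fun _ => i₀) (fun _ => 0) π i =
      v i (soldTo (fun _ => i₀) π i m) := by
    intro i; simp [util]
  refine ⟨fun j => le_refl 0, ?_, ?_⟩
  · intro i
    rw [hutil]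
    by_cases hi : i = i₀
    · subst hi
      calc (0:ℝ) = v i ∅ := (hempty i).symm
        _ ≤ _ := hmono i ∅ _ (Finset.empty_subset _)
    · rw [hne i hi]; rw [hempty i]
  · intro i k
    rw [hutil]
    simp only [Finset.sum_const, smul_zero, sub_zero]
    by_cases hi : i = i₀
    · subst hi
      have h : soldTo (fun _ => i) π i m = Finset.univ := by
        ext t; simp [soldTo, t.2]
      rw [h]
      exact hmono i _ _ (Finset.subset_univ _)
    · rw [hne i hi, hne i hi]
      rw [Finset.insert_empty, hsingle i (π k), hempty i]
end

section
/- Suppose every buyer's valuation is monotone (v_i(S) ≤ v_i(T) whenever S ⊆ T), submodular (v_i(S ∪ {g}) − v_i(S) ≥ v_i(T ∪ {g}) − v_i(T) whenever S ⊆ T and g ∉ T), and satisfies v_i(∅) = 0. Then there exists an outcome (win, p, π) satisfying the SPE characterization condition in which every buyer's utility u_i equals 0 and the revenue Σ_{j∈M} p(j) is at least OPT/2; that is, the seller extracts at least half of the optimal social welfare as revenue and the buyers get no utility. -/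
open Finset

open Finset
section Aux
variable {N : Type*} [Fintype N] [DecidableEq N] [Nonempty N] {m : ℕ}

noncomputable def argmaxN (f : N → ℝ) : N :=
  Classical.choose (Finset.exists_max_image (Finset.univ : Finset N) f Finset.univ_nonempty)

lemma argmaxN_spec (f : N → ℝ) (i : N) : f i ≤ f (argmaxN f) := by
  obtain ⟨-, h2⟩ := Classical.choose_spec
    (Finset.exists_max_image (Finset.univ : Finset N) f Finset.univ_nonempty)
  exact h2 i (Finset.mem_univ i)

variable (v : N → Finset (Fin m) → ℝ)

noncomputable def bundles : ℕ → N → Finset (Fin m)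
  | 0 => fun _ => ∅
  | (k+1) => fun i =>
      if h : k < m then
        if argmaxN (fun j => v j (insert ⟨k, h⟩ (bundles k j)) - v j (bundles k j)) = i
        then insert ⟨k, h⟩ (bundles k i) else bundles k i
      else bundles k i

noncomputable def winner (g : Fin m) : N :=
  argmaxN (fun j => v j (insert g (bundles v g.val j)) - v j (bundles v g.val j))

noncomputable def price (g : Fin m) : ℝ :=
  v (winner v g) (insert g (bundles v g.val (winner v g)))
    - v (winner v g) (bundles v g.val (winner v g))

lemma mem_bundles (k : ℕ) (i : N) (t : Fin m) :
    t ∈ bundles v k i ↔ (t : ℕ) < k ∧ winner v t = i := by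
  induction k with
  | zero => simp [bundles]
  | succ k ih =>
    simp only [bundles]
    split_ifs with h hw
    · rw [Finset.mem_insert, ih]
      constructor
      · rintro (rfl | ⟨h1, h2⟩)
        · exact ⟨Nat.lt_succ_self k, hw⟩
        · exact ⟨Nat.lt_succ_of_lt h1, h2⟩
      · rintro ⟨h1, h2⟩
        rcases Nat.lt_succ_iff_lt_or_eq.mp h1 with h1 | h1
        · exact Or.inr ⟨h1, h2⟩
        · exact Or.inl (Fin.ext h1)
    · rw [ih]
      constructor
      · rintro ⟨h1, h2⟩; exact ⟨Nat.lt_succ_of_lt h1, h2⟩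
      · rintro ⟨h1, h2⟩
        rcases Nat.lt_succ_iff_lt_or_eq.mp h1 with h1 | h1
        · exact ⟨h1, h2⟩
        · exfalso; apply hw
          have ht : t = (⟨k, h⟩ : Fin m) := Fin.ext h1
          rw [ht] at h2; exact h2
    · have htk : (t : ℕ) < k := lt_of_lt_of_le t.isLt (Nat.le_of_not_lt h)
      rw [ih]
      exact ⟨fun ⟨_, h2⟩ => ⟨Nat.lt_succ_of_lt htk, h2⟩, fun ⟨_, h2⟩ => ⟨htk, h2⟩⟩

lemma bundles_mono {k k' : ℕ} (hk : k ≤ k') (i : N) :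
    bundles v k i ⊆ bundles v k' i := by
  intro t ht
  rw [mem_bundles] at ht ⊢
  exact ⟨lt_of_lt_of_le ht.1 hk, ht.2⟩

lemma value_sum (hempty : ∀ i, v i ∅ = 0) (k : ℕ) (i : N) :
    v i (bundles v k i) = ∑ t ∈ bundles v k i, price v t := by
  induction k with
  | zero => simp [bundles, hempty]
  | succ k ih =>
    simp only [bundles]
    split_ifs with h hw
    · have hnot : (⟨k, h⟩ : Fin m) ∉ bundles v k i := by
        rw [mem_bundles]; simp
      rw [Finset.sum_insert hnot, ← ih]
      have hp : price v ⟨k, h⟩ = v i (insert ⟨k, h⟩ (bundles v k i)) - v i (bundles v k i) := by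
        have hwk : winner v (⟨k, h⟩ : Fin m) = i := hw
        rw [price, hwk]
      rw [hp]; ring
    · exact ih
    · exact ih

lemma submod_bound (w : Finset (Fin m) → ℝ)
    (hmono : ∀ S T, S ⊆ T → w S ≤ w T)
    (hsub : ∀ S T g, S ⊆ T → g ∉ T → w (insert g T) - w T ≤ w (insert g S) - w S)
    (S T : Finset (Fin m)) :
    w (S ∪ T) ≤ w T + ∑ g ∈ S \ T, (w (insert g T) - w T) := by
  induction S using Finset.induction with
  | empty => simp
  | @insert a S ha ih =>
    by_cases haT : a ∈ T
    · have h1 : insert a S ∪ T = S ∪ T := by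
        rw [Finset.insert_union, Finset.insert_eq_self.mpr (Finset.mem_union_right S haT)]
      have h2 : insert a S \ T = S \ T := Finset.insert_sdiff_of_mem _ haT
      rw [h1, h2]; exact ih
    · have haST : a ∉ S ∪ T := by simp [ha, haT]
      have h1 : insert a S ∪ T = insert a (S ∪ T) := Finset.insert_union a S T
      have h2 : insert a S \ T = insert a (S \ T) := Finset.insert_sdiff_of_notMem _ haT
      have h3 : a ∉ S \ T := fun hc => ha (Finset.mem_sdiff.mp hc).1
      have h4 : w (insert a (S ∪ T)) - w (S ∪ T) ≤ w (insert a T) - w T :=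
        hsub T (S ∪ T) a Finset.subset_union_right haST
      rw [h1, h2, Finset.sum_insert h3]
      linarith

end Aux

/-- If all buyers have monotone, submodular, normalized valuations, then there
is an outcome satisfying the SPE characterization condition in which every
buyer's utility is `0` and the revenue is at least half of the optimal social
welfare: the seller extracts at least `OPT / 2` as revenue. -/
theorem high_revenue_submodular_SPE {N : Type*} [Fintype N] [DecidableEq N]
    [Nonempty N] {m : ℕ} (hm : 1 ≤ m)
    (v : N → Finset (Fin m) → ℝ)
    (hempty : ∀ i, v i ∅ = 0)
    (hmono : ∀ i S T, S ⊆ T → v i S ≤ v i T)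
    (hsubmod : ∀ (i : N) (S T : Finset (Fin m)) (g : Fin m), S ⊆ T → g ∉ T →
        v i (insert g T) - v i T ≤ v i (insert g S) - v i S) :
    ∃ (win : Fin m → N) (p : Fin m → ℝ) (π : Equiv.Perm (Fin m)),
      SPECond v win p π ∧
      (∀ i, util v win p π i = 0) ∧
      ∀ A : Fin m → N,
        ∑ i, v i (Finset.univ.filter fun j => A j = i) ≤ 2 * ∑ j, p j := by
  classical
  refine ⟨winner v, price v, Equiv.refl _, ?_⟩
  have hsold : ∀ (i : N) (j : ℕ),
      soldTo (winner v) (Equiv.refl (Fin m)) i j = bundles v j i := by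
    intro i j
    ext t
    rw [soldTo, Finset.mem_filter, mem_bundles]
    simp
  -- basic price facts
  have hp0 : ∀ g, 0 ≤ price v g := by
    intro g
    have := hmono (winner v g) (bundles v g.val (winner v g))
      (insert g (bundles v g.val (winner v g))) (Finset.subset_insert _ _)
    simp only [price]
    linarith
  have hpmax : ∀ (i : N) (g : Fin m),
      v i (insert g (bundles v (g : ℕ) i)) - v i (bundles v (g : ℕ) i) ≤ price v g := by
    intro i g
    exact argmaxN_spec (fun j => v j (insert g (bundles v g.val j)) - v j (bundles v g.val j)) i
  have hutil : ∀ i, util v (winner v) (price v) (Equiv.refl (Fin m)) i = 0 := by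
    intro i
    rw [util, hsold, value_sum v hempty]
    ring
  have hbundle_eq : ∀ i : N,
      bundles v m i = Finset.univ.filter fun g => winner v g = i := by
    intro i
    ext t
    simp [mem_bundles, t.isLt]
  refine ⟨⟨hp0, fun i => le_of_eq (hutil i).symm, ?_⟩, hutil, ?_⟩
  · -- SPE third condition
    intro i k
    rw [hutil i, hsold, Equiv.refl_apply, ← value_sum v hempty]
    have := hpmax i k
    linarith
  · -- revenue bound
    intro A
    have hXsum : ∑ i, v i (bundles v m i) = ∑ g, price v g := by
      rw [← Finset.sum_fiberwise Finset.univ (winner v) (price v)]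
      refine Finset.sum_congr rfl fun i _ => ?_
      rw [value_sum v hempty, hbundle_eq]
    have key : ∀ i : N, v i (Finset.univ.filter fun j => A j = i) ≤
        v i (bundles v m i) +
          ∑ g ∈ (Finset.univ.filter fun j => A j = i) \ bundles v m i, price v g := by
      intro i
      set Ai := Finset.univ.filter fun j => A j = i with hAi
      set Xi := bundles v m i with hXi
      have h1 : v i Ai ≤ v i (Ai ∪ Xi) := hmono i _ _ Finset.subset_union_left
      have h2 : v i (Ai ∪ Xi) ≤ v i Xi + ∑ g ∈ Ai \ Xi, (v i (insert g Xi) - v i Xi) :=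
        submod_bound (v i) (hmono i) (hsubmod i) Ai Xi
      have h3 : ∑ g ∈ Ai \ Xi, (v i (insert g Xi) - v i Xi) ≤ ∑ g ∈ Ai \ Xi, price v g := by
        refine Finset.sum_le_sum fun g hg => ?_
        have hgX : g ∉ Xi := (Finset.mem_sdiff.mp hg).2
        have hsub : bundles v (g : ℕ) i ⊆ Xi :=
          hXi ▸ bundles_mono v (le_of_lt g.isLt) i
        calc v i (insert g Xi) - v i Xi
            ≤ v i (insert g (bundles v (g : ℕ) i)) - v i (bundles v (g : ℕ) i) :=
              hsubmod i _ _ g hsub hgX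
          _ ≤ price v g := hpmax i g
      linarith
    have hdiff : ∑ i, ∑ g ∈ (Finset.univ.filter fun j => A j = i) \ bundles v m i, price v g
        ≤ ∑ g, price v g := by
      calc ∑ i, ∑ g ∈ (Finset.univ.filter fun j => A j = i) \ bundles v m i, price v g
          ≤ ∑ i, ∑ g ∈ Finset.univ.filter fun j => A j = i, price v g := by
            refine Finset.sum_le_sum fun i _ => ?_
            exact Finset.sum_le_sum_of_subset_of_nonneg Finset.sdiff_subset
              (fun g _ _ => hp0 g)
        _ = ∑ g, price v g := Finset.sum_fiberwise Finset.univ A (price v)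
    calc ∑ i, v i (Finset.univ.filter fun j => A j = i)
        ≤ ∑ i, (v i (bundles v m i) +
            ∑ g ∈ (Finset.univ.filter fun j => A j = i) \ bundles v m i, price v g) :=
          Finset.sum_le_sum fun i _ => key i
      _ = ∑ i, v i (bundles v m i) +
            ∑ i, ∑ g ∈ (Finset.univ.filter fun j => A j = i) \ bundles v m i, price v g :=
          Finset.sum_add_distrib
      _ ≤ ∑ g, price v g + ∑ g, price v g := by rw [hXsum]; linarith
      _ = 2 * ∑ j, price v j := by ring
end

section
/- Suppose every buyer's valuation is monotone (v_i(S) ≤ v_i(T) whenever S ⊆ T), submodular (v_i(S ∪ {g}) − v_i(S) ≥ v_i(T ∪ {g}) − v_i(T) whenever S ⊆ T and g ∉ T), and satisfies v_i(∅) = 0. Suppose the allocation win and selling order π are greedy: for every step 1 ≤ k ≤ m, every buyer i, and every item g ∉ {π_1,…,π_{k−1}}, the marginal value v_{win(π_k)}(x_{win(π_k)}(π,k−1) ∪ {π_k}) − v_{win(π_k)}(x_{win(π_k)}(π,k−1)) is at least v_i(x_i(π,k−1) ∪ {g}) − v_i(x_i(π,k−1)). Then the social welfare of the greedy allocation, Σ_{i∈N}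 v_i(x_i(π,m)), is at least OPT/2. -/
open Finset

lemma mem_soldTo {N : Type*} [DecidableEq N] {m : ℕ} {win : Fin m → N}
    {π : Equiv.Perm (Fin m)} {i : N} {j : ℕ} {t : Fin m} :
    t ∈ soldTo win π i j ↔ (π.symm t : ℕ) < j ∧ win t = i := by
  simp [soldTo]

lemma soldTo_mono {N : Type*} [DecidableEq N] {m : ℕ} (win : Fin m → N)
    (π : Equiv.Perm (Fin m)) (i : N) {j j' : ℕ} (h : j ≤ j') :
    soldTo win π i j ⊆ soldTo win π i j' := by
  intro t ht
  rw [mem_soldTo] at ht ⊢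
  exact ⟨lt_of_lt_of_le ht.1 h, ht.2⟩

lemma not_mem_soldTo {N : Type*} [DecidableEq N] {m : ℕ} (win : Fin m → N)
    (π : Equiv.Perm (Fin m)) (i : N) (g : Fin m) :
    g ∉ soldTo win π i (π.symm g : ℕ) := by
  simp [mem_soldTo]

lemma soldTo_succ {N : Type*} [DecidableEq N] {m : ℕ} (win : Fin m → N)
    (π : Equiv.Perm (Fin m)) (i : N) (k : Fin m) :
    soldTo win π i ((k : ℕ) + 1) =
      if win (π k) = i then insert (π k) (soldTo win π i k)
      else soldTo win π i k := by
  ext t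
  have hπk : π.symm t = k ↔ t = π k := by
    constructor
    · intro h; simpa using congrArg π h
    · intro h; simp [h]
  by_cases h : win (π k) = i
  · simp only [if_pos h, mem_insert, mem_soldTo]
    constructor
    · rintro ⟨hlt, hwin⟩
      rcases Nat.lt_succ_iff_lt_or_eq.mp hlt with h1 | h1
      · exact Or.inr ⟨h1, hwin⟩
      · exact Or.inl (hπk.mp (Fin.ext h1))
    · rintro (rfl | ⟨h1, h2⟩)
      · exact ⟨by simp, h⟩
      · exact ⟨Nat.lt_succ_of_lt h1, h2⟩
  · simp only [if_neg h, mem_soldTo]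
    constructor
    · rintro ⟨hlt, hwin⟩
      rcases Nat.lt_succ_iff_lt_or_eq.mp hlt with h1 | h1
      · exact ⟨h1, hwin⟩
      · exact absurd hwin (by rw [hπk.mp (Fin.ext h1)]; exact h)
    · rintro ⟨h1, h2⟩
      exact ⟨Nat.lt_succ_of_lt h1, h2⟩

lemma sum_marginals {m : ℕ} (v : Finset (Fin m) → ℝ)
    (hsub : ∀ S T g, S ⊆ T → g ∉ T → v (insert g T) - v T ≤ v (insert g S) - v S)
    (S : Finset (Fin m)) :
    ∀ B : Finset (Fin m), Disjoint S B →
      v (S ∪ B) - v S ≤ ∑ g ∈ B, (v (insert g S) - v S) := by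
  intro B
  induction B using Finset.induction_on with
  | empty => simp
  | @insert g B hg ih =>
    intro hdisj
    have hdB : Disjoint S B := hdisj.mono_right (Finset.subset_insert g B)
    have hgS : g ∉ S ∪ B := by
      simp only [Finset.mem_union, not_or]
      exact ⟨fun h => (Finset.disjoint_left.mp hdisj h (Finset.mem_insert_self g B)), hg⟩
    have h1 : v (S ∪ insert g B) - v (S ∪ B) ≤ v (insert g S) - v S := by
      have : S ∪ insert g B = insert g (S ∪ B) := by
        ext x; simp [or_left_comm]
      rw [this]
      exact hsub S (S ∪ B) g Finset.subset_union_left hgS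
    rw [Finset.sum_insert hg]
    have := ih hdB
    linarith

/-- If all buyers have monotone, submodular, normalized valuations and the
allocation `win` together with the selling order `π` is greedy — at every step
the marginal value of the allocated buyer for the item sold is at least the
marginal value of any buyer for any yet-unsold item — then the social welfare
of the greedy allocation is at least half of the optimal social welfare. -/
theorem greedy_allocation_half_opt {N : Type*} [Fintype N] [DecidableEq N]
    {m : ℕ} (hm : 1 ≤ m)
    (v : N → Finset (Fin m) → ℝ)
    (hempty : ∀ i, v i ∅ = 0)
    (hmono : ∀ i S T, S ⊆ T → v i S ≤ v i T)
    (hsubmod : ∀ (i : N) (S T : Finset (Fin m)) (g : Fin m), S ⊆ T → g ∉ T →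
        v i (insert g T) - v i T ≤ v i (insert g S) - v i S)
    (win : Fin m → N) (π : Equiv.Perm (Fin m))
    (hgreedy : ∀ (k : Fin m) (i : N) (g : Fin m), (k : ℕ) ≤ (π.symm g : ℕ) →
        v i (insert g (soldTo win π i (k : ℕ))) - v i (soldTo win π i (k : ℕ))
          ≤ v (win (π k)) (insert (π k) (soldTo win π (win (π k)) (k : ℕ)))
              - v (win (π k)) (soldTo win π (win (π k)) (k : ℕ))) :
    ∀ A : Fin m → N,
      ∑ i, v i (Finset.univ.filter fun j => A j = i)
        ≤ 2 * ∑ i, v i (soldTo win π i m) := by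
  intro A
  set δ : Fin m → ℝ := fun k =>
    v (win (π k)) (insert (π k) (soldTo win π (win (π k)) (k : ℕ)))
      - v (win (π k)) (soldTo win π (win (π k)) (k : ℕ)) with hδ
  have hδnonneg : ∀ k, 0 ≤ δ k := fun k =>
    sub_nonneg.mpr (hmono (win (π k)) _ _
      (Finset.subset_insert (π k) (soldTo win π (win (π k)) (k : ℕ))))
  -- telescoping identity
  have key : ∀ j, j ≤ m →
      ∑ i, v i (soldTo win π i j)
        = ∑ k ∈ univ.filter (fun k : Fin m => (k : ℕ) < j), δ k := by
    intro j
    induction j with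
    | zero =>
      intro _
      have h0 : ∀ i, soldTo win π i 0 = (∅ : Finset (Fin m)) := by
        intro i; ext t; simp [mem_soldTo]
      simp [h0, hempty]
    | succ j ih =>
      intro hj
      have hjm : j < m := hj
      set k : Fin m := ⟨j, hjm⟩ with hk
      have hfil : univ.filter (fun x : Fin m => (x : ℕ) < j + 1)
          = insert k (univ.filter (fun x : Fin m => (x : ℕ) < j)) := by
        ext x
        simp only [mem_filter, mem_univ, true_and, mem_insert, Fin.ext_iff, hk]
        omega
      have hstep : ∀ i, v i (soldTo win π i (j + 1)) =
          v i (soldTo win π i j) + (if win (π k) = i then δ k else 0) := by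
        intro i
        have hs := soldTo_succ win π i k
        have hkj : (k : ℕ) = j := rfl
        rw [hkj] at hs
        by_cases h : win (π k) = i
        · rw [hs, if_pos h, if_pos h]
          subst h
          have hδk : δ k = v (win (π k)) (insert (π k) (soldTo win π (win (π k)) j))
              - v (win (π k)) (soldTo win π (win (π k)) j) := rfl
          rw [hδk]; ring
        · rw [hs, if_neg h, if_neg h, add_zero]
      calc ∑ i, v i (soldTo win π i (j + 1))
          = ∑ i, (v i (soldTo win π i j) + (if win (π k) = i then δ k else 0)) :=
            Finset.sum_congr rfl (fun i _ => hstep i)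
        _ = (∑ i, v i (soldTo win π i j)) + δ k := by
            rw [Finset.sum_add_distrib, Finset.sum_ite_eq]
            simp
        _ = ∑ x ∈ univ.filter (fun x : Fin m => (x : ℕ) < j + 1), δ x := by
            rw [hfil, Finset.sum_insert (by simp [hk]), ih (le_of_lt hjm)]
            ring
  have hG : ∑ i, v i (soldTo win π i m) = ∑ k, δ k := by
    rw [key m le_rfl]
    congr 1
    ext x; simp [x.isLt]
  -- notation
  set S : N → Finset (Fin m) := fun i => soldTo win π i m with hS
  set Ai : N → Finset (Fin m) := fun i => univ.filter (fun j => A j = i) with hAi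
  set B : N → Finset (Fin m) := fun i => Ai i \ S i with hB
  -- step 3 : marginal bound
  have hmarg : ∀ i, ∀ g ∈ B i, v i (insert g (S i)) - v i (S i) ≤ δ (π.symm g) := by
    intro i g hg
    have hgS : g ∉ S i := (Finset.mem_sdiff.mp hg).2
    have hsubset : soldTo win π i (π.symm g : ℕ) ⊆ S i :=
      soldTo_mono win π i (le_of_lt (π.symm g).isLt)
    calc v i (insert g (S i)) - v i (S i)
        ≤ v i (insert g (soldTo win π i (π.symm g : ℕ)))
            - v i (soldTo win π i (π.symm g : ℕ)) :=
          hsubmod i _ _ g hsubset hgS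
      _ ≤ δ (π.symm g) := hgreedy (π.symm g) i g le_rfl
  -- main chain
  have step1 : ∀ i, v i (Ai i) ≤ v i (S i ∪ B i) := by
    intro i
    apply hmono
    intro x hx
    by_cases h : x ∈ S i
    · exact Finset.mem_union_left _ h
    · exact Finset.mem_union_right _ (Finset.mem_sdiff.mpr ⟨hx, h⟩)
  have step2 : ∀ i, v i (S i ∪ B i) ≤ v i (S i) + ∑ g ∈ B i, δ (π.symm g) := by
    intro i
    have h1 := sum_marginals (v i) (hsubmod i) (S i) (B i) Finset.disjoint_sdiff
    have h2 : ∑ g ∈ B i, (v i (insert g (S i)) - v i (S i)) ≤ ∑ g ∈ B i, δ (π.symm g) :=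
      Finset.sum_le_sum (fun g hg => hmarg i g hg)
    linarith
  have step4 : ∑ i, ∑ g ∈ B i, δ (π.symm g) ≤ ∑ i, ∑ g ∈ Ai i, δ (π.symm g) :=
    Finset.sum_le_sum (fun i _ => Finset.sum_le_sum_of_subset_of_nonneg
      Finset.sdiff_subset (fun g _ _ => hδnonneg (π.symm g)))
  have step5 : ∑ i, ∑ g ∈ Ai i, δ (π.symm g) = ∑ g, δ (π.symm g) :=
    Finset.sum_fiberwise univ A (fun g => δ (π.symm g))
  have step6 : ∑ g, δ (π.symm g) = ∑ k, δ k := Equiv.sum_comp π.symm δ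
  have chain : ∑ i, v i (Ai i) ≤ (∑ i, v i (S i)) + ∑ k, δ k := by
    calc ∑ i, v i (Ai i) ≤ ∑ i, v i (S i ∪ B i) := Finset.sum_le_sum (fun i _ => step1 i)
      _ ≤ ∑ i, (v i (S i) + ∑ g ∈ B i, δ (π.symm g)) :=
          Finset.sum_le_sum (fun i _ => step2 i)
      _ = (∑ i, v i (S i)) + ∑ i, ∑ g ∈ B i, δ (π.symm g) := Finset.sum_add_distrib
      _ ≤ (∑ i, v i (S i)) + ∑ k, δ k := by
          have := step4.trans (le_of_eq (step5.trans step6))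
          linarith
  rw [hG] at chain ⊢
  linarith
end

section
/- In a unit-demand market, if (win, p¹) and (win, p²) are both Walrasian equilibria with the same allocation win, then (win, p), where p_j = min(p¹_j, p²_j) for every item j, is also a Walrasian equilibrium. -/
/-- A Walrasian equilibrium in a unit-demand market with per-item values `v`:
an injective allocation `win` (each item is sold, each buyer wins at most one
item) and nonnegative prices `p` such that every winner gets nonnegative
utility from his item and weakly prefers it to every other item, and every
buyer who wins nothing cannot afford any item. -/
def IsWE {N M : Type*} (v : N → M → ℝ) (win : M → N) (p : M → ℝ) : Prop :=
  Function.Injective win ∧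
  (∀ j, 0 ≤ p j) ∧
  (∀ j, 0 ≤ v (win j) j - p j) ∧
  (∀ j k, v (win j) k - p k ≤ v (win j) j - p j) ∧
  (∀ i, (∀ j, win j ≠ i) → ∀ j, v i j ≤ p j)

/-- If `(win, p¹)` and `(win, p²)` are Walrasian equilibria of a unit-demand
market with the same allocation, then so is `(win, p)` where
`p j = min (p¹ j) (p² j)` for every item `j`. -/
theorem min_prices_walrasian {N M : Type*} [Fintype N] [Fintype M]
    (v : N → M → ℝ) (hv : ∀ i j, 0 ≤ v i j)
    (win : M → N) (p₁ p₂ : M → ℝ)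
    (h₁ : IsWE v win p₁) (h₂ : IsWE v win p₂) :
    IsWE v win (fun j => min (p₁ j) (p₂ j)) := by
  obtain ⟨hinj, hp₁, hw₁, hpref₁, hl₁⟩ := h₁
  obtain ⟨-, hp₂, hw₂, hpref₂, hl₂⟩ := h₂
  refine ⟨hinj, fun j => le_min (hp₁ j) (hp₂ j), fun j => ?_, fun j k => ?_, fun i hi j => le_min (hl₁ i hi j) (hl₂ i hi j)⟩
  · have := hw₁ j
    have := min_le_left (p₁ j) (p₂ j)
    dsimp only
    linarith
  · dsimp only
    rcases le_total (p₁ k) (p₂ k) with h | h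
    · rw [min_eq_left h]
      have := hpref₁ j k
      have := min_le_left (p₁ j) (p₂ j)
      linarith
    · rw [min_eq_right h]
      have := hpref₂ j k
      have := min_le_right (p₁ j) (p₂ j)
      linarith
end

section
/- In a unit-demand market, assume at least one Walrasian equilibrium exists and all Walrasian equilibria have the same allocation win (for instance, because the welfare-maximizing allocation is unique). Then there exist minimum Walrasian prices: a Walrasian equilibrium (win, p*) such that p*_j ≤ p_j for every item j and every Walrasian equilibrium (win, p). -/
/-- In a unit-demand market, if a Walrasian equilibrium exists and all
Walrasian equilibria have the same allocation `win`, then there exist minimum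
Walrasian prices: a Walrasian equilibrium `(win, p*)` with `p* j ≤ p j` for
every item `j` and every Walrasian equilibrium `(win, p)`. -/
theorem exists_minimum_walrasian_prices {N M : Type*} [Fintype N] [Fintype M]
    (v : N → M → ℝ) (hv : ∀ i j, 0 ≤ v i j)
    (win : M → N)
    (hex : ∃ p, IsWE v win p)
    (halloc : ∀ (win' : M → N) (p' : M → ℝ), IsWE v win' p' → win' = win) :
    ∃ pstar : M → ℝ, IsWE v win pstar ∧
      ∀ p : M → ℝ, IsWE v win p → ∀ j, pstar j ≤ p j := by
  classical
  obtain ⟨p0, hp0⟩ := hex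
  set S : Set (M → ℝ) := {p | IsWE v win p} with hSdef
  have hp0S : p0 ∈ S := hp0
  -- pointwise min of two equilibrium prices is an equilibrium price
  have hmin : ∀ p q : M → ℝ, IsWE v win p → IsWE v win q →
      IsWE v win (fun j => min (p j) (q j)) := by
    intro p q hp hq
    obtain ⟨hinj, hp1, hp2, hp3, hp4⟩ := hp
    obtain ⟨_, hq1, hq2, hq3, hq4⟩ := hq
    refine ⟨hinj, fun j => le_min (hp1 j) (hq1 j), ?_, ?_, ?_⟩
    · intro j
      have h := hp2 j
      have : min (p j) (q j) ≤ p j := min_le_left _ _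
      simp only
      linarith
    · intro j k
      simp only
      rcases le_total (p k) (q k) with h | h
      · have hk : min (p k) (q k) = p k := min_eq_left h
        have hj : min (p j) (q j) ≤ p j := min_le_left _ _
        have := hp3 j k
        rw [hk]; linarith
      · have hk : min (p k) (q k) = q k := min_eq_right h
        have hj : min (p j) (q j) ≤ q j := min_le_right _ _
        have := hq3 j k
        rw [hk]; linarith
    · intro i hi j
      exact le_min (hp4 i hi j) (hq4 i hi j)
  have hbdd : ∀ j : M, BddBelow ((fun p : M → ℝ => p j) '' S) := by
    intro j
    refine ⟨0, ?_⟩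
    rintro x ⟨p, hp, rfl⟩
    exact hp.2.1 j
  have hne : ∀ j : M, ((fun p : M → ℝ => p j) '' S).Nonempty :=
    fun j => ⟨p0 j, p0, hp0S, rfl⟩
  set q : M → ℝ := fun j => sInf ((fun p : M → ℝ => p j) '' S) with hqdef
  have hqle : ∀ p ∈ S, ∀ j, q j ≤ p j := fun p hp j =>
    csInf_le (hbdd j) ⟨p, hp, rfl⟩
  -- approximation: for every ε > 0 there is an equilibrium within ε of q
  have happrox : ∀ ε : ℝ, 0 < ε → ∃ r ∈ S, ∀ j, r j ≤ q j + ε := by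
    intro ε hε
    have key : ∀ T : Finset M, ∃ r ∈ S, ∀ j ∈ T, r j ≤ q j + ε := by
      intro T
      induction T using Finset.induction with
      | empty => exact ⟨p0, hp0S, by simp⟩
      | @insert a T ha ih =>
        obtain ⟨r, hrS, hrT⟩ := ih
        have hlt : sInf ((fun p : M → ℝ => p a) '' S) < q a + ε := by
          have := lt_add_of_pos_right (q a) hε
          simpa [hqdef] using this
        obtain ⟨x, hxmem, hx⟩ := (csInf_lt_iff (hbdd a) (hne a)).1 hlt
        obtain ⟨pa, hpaS, rfl⟩ := hxmem
        refine ⟨fun j => min (r j) (pa j), hmin r pa hrS hpaS, ?_⟩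
        intro j hj
        rcases Finset.mem_insert.1 hj with rfl | hjT
        · exact le_trans (min_le_right _ _) (le_of_lt hx)
        · exact le_trans (min_le_left _ _) (hrT j hjT)
    obtain ⟨r, hrS, hr⟩ := key Finset.univ
    exact ⟨r, hrS, fun j => hr j (Finset.mem_univ j)⟩
  refine ⟨q, ?_, fun p hp j => hqle p hp j⟩
  obtain ⟨hinj, _, hp2, _, _⟩ := hp0
  refine ⟨hinj, ?_, ?_, ?_, ?_⟩
  · intro j
    refine le_csInf (hne j) ?_
    rintro x ⟨p, hp, rfl⟩
    exact hp.2.1 j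
  · intro j
    have h1 : q j ≤ p0 j := hqle p0 hp0S j
    have := hp2 j
    linarith
  · intro j k
    refine le_of_forall_pos_le_add ?_
    intro ε hε
    obtain ⟨r, hrS, hr⟩ := happrox ε hε
    have h1 : q j ≤ r j := hqle r hrS j
    have h2 : r k ≤ q k + ε := hr k
    have h3 := hrS.2.2.2.1 j k
    linarith
  · intro i hi j
    refine le_csInf (hne j) ?_
    rintro x ⟨p, hp, rfl⟩
    exact hp.2.2.2.2 i hi j
end

section
/- In a unit-demand market, let (win, p) be a minimum Walrasian equilibrium. Then every item j with strictly positive price p_j > 0 has a supporter: a buyer i ≠ win(j) such that either i = win(k) for some item k with v_{i,k} − p_k = v_{i,j} − p_j, or i wins no item and v_{i,j} = p_j. -/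
/-- Buyer `i` supports item `j`: `i` does not win `j`, and either `i` wins some
item `k` with `v i k - p k = v i j - p j`, or `i` wins no item and
`v i j = p j`. -/
def Supports {N M : Type*} (v : N → M → ℝ) (win : M → N) (p : M → ℝ)
    (i : N) (j : M) : Prop :=
  i ≠ win j ∧
    ((∃ k, win k = i ∧ v i k - p k = v i j - p j) ∨
      ((∀ k, win k ≠ i) ∧ v i j = p j))

/-- A minimum Walrasian equilibrium: its prices are pointwise below the prices
of every Walrasian equilibrium. -/
def IsMinWE {N M : Type*} (v : N → M → ℝ) (win : M → N) (p : M → ℝ) : Prop :=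
  IsWE v win p ∧
    ∀ (win' : M → N) (p' : M → ℝ), IsWE v win' p' → ∀ j, p j ≤ p' j

/-- In a minimum Walrasian equilibrium of a unit-demand market, every item with
strictly positive price has a supporter. -/
theorem minimum_walrasian_support {N M : Type*} [Fintype N] [Fintype M]
    (v : N → M → ℝ) (hv : ∀ i j, 0 ≤ v i j)
    (win : M → N) (p : M → ℝ)
    (hmin : IsMinWE v win p) :
    ∀ j, 0 < p j → ∃ i, Supports v win p i j := by
  classical
  intro j₀ hpj
  by_contra hno
  push_neg at hno
  obtain ⟨⟨hinj, hp0, hiru, hopt, hlose⟩, hminp⟩ := hmin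
  -- define positive gaps
  set g : N → ℝ := fun i =>
    if i = win j₀ then p j₀
    else if h : ∃ k, win k = i then v i h.choose - p h.choose - (v i j₀ - p j₀)
    else p j₀ - v i j₀ with hg
  have hgwin : ∀ j : M, j ≠ j₀ → g (win j) = v (win j) j - p j - (v (win j) j₀ - p j₀) := by
    intro j hj
    have h1 : win j ≠ win j₀ := fun h => hj (hinj h)
    have h2 : ∃ k, win k = win j := ⟨j, rfl⟩
    have hk : h2.choose = j := hinj h2.choose_spec
    simp only [hg, if_neg h1, dif_pos h2, hk]
  have hglose : ∀ i : N, (∀ k, win k ≠ i) → g i = p j₀ - v i j₀ := by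
    intro i hi
    have h1 : i ≠ win j₀ := fun h => hi j₀ h.symm
    have h2 : ¬ ∃ k, win k = i := by
      rintro ⟨k, hk⟩; exact hi k hk
    simp only [hg, if_neg h1, dif_neg h2]
  have hgpos : ∀ i, 0 < g i := by
    intro i
    by_cases h1 : i = win j₀
    · simpa [hg, h1] using hpj
    · have hns : ¬ Supports v win p i j₀ := hno i
      rw [Supports] at hns
      push_neg at hns
      have hns' := hns h1
      by_cases h2 : ∃ k, win k = i
      · obtain ⟨k, hk⟩ := h2
        have hrw := hgwin k (fun h => h1 (by rw [← hk, h]))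
        rw [hk] at hrw
        have hle : v i j₀ - p j₀ ≤ v i k - p k := by
          have := hopt k j₀; rw [hk] at this; exact this
        have hne : v i k - p k ≠ v i j₀ - p j₀ := hns'.1 k hk
        rw [hrw]
        have : v i j₀ - p j₀ < v i k - p k := lt_of_le_of_ne hle (fun h => hne h.symm)
        linarith
      · have hi : ∀ k, win k ≠ i := fun k hk => h2 ⟨k, hk⟩
        rw [hglose i hi]
        have hle : v i j₀ ≤ p j₀ := hlose i hi j₀
        have hne : v i j₀ ≠ p j₀ := hns'.2 hi
        have : v i j₀ < p j₀ := lt_of_le_of_ne hle hne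
        linarith
  have hNe : (Finset.univ : Finset N).Nonempty := ⟨win j₀, Finset.mem_univ _⟩
  set ε : ℝ := Finset.univ.inf' hNe g with hε
  have hεpos : 0 < ε := by
    rw [hε, Finset.lt_inf'_iff]
    intro i _; exact hgpos i
  have hεle : ∀ i, ε ≤ g i := fun i => Finset.inf'_le g (Finset.mem_univ i)
  set p' : M → ℝ := Function.update p j₀ (p j₀ - ε) with hp'
  have hp'j₀ : p' j₀ = p j₀ - ε := Function.update_self _ _ _
  have hp'ne : ∀ j, j ≠ j₀ → p' j = p j := fun j hj => Function.update_of_ne hj _ _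
  have hεpj : ε ≤ p j₀ := by
    have := hεle (win j₀)
    simpa [hg] using this
  have hWE : IsWE v win p' := by
    refine ⟨hinj, ?_, ?_, ?_, ?_⟩
    · intro j
      by_cases hj : j = j₀
      · subst hj; rw [hp'j₀]; linarith
      · rw [hp'ne j hj]; exact hp0 j
    · intro j
      by_cases hj : j = j₀
      · subst hj; rw [hp'j₀]; have := hiru j; linarith
      · rw [hp'ne j hj]; exact hiru j
    · intro j k
      by_cases hj : j = j₀
      · rw [hj]
        by_cases hk : k = j₀
        · rw [hk]
        · rw [hp'ne k hk, hp'j₀]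
          have := hopt j₀ k; linarith
      · by_cases hk : k = j₀
        · rw [hk]
          rw [hp'ne j hj, hp'j₀]
          have h1 := hεle (win j)
          rw [hgwin j hj] at h1
          linarith
        · rw [hp'ne j hj, hp'ne k hk]; exact hopt j k
    · intro i hi j
      by_cases hj : j = j₀
      · subst hj
        rw [hp'j₀]
        have h1 := hεle i
        rw [hglose i hi] at h1
        linarith
      · rw [hp'ne j hj]; exact hlose i hi j
  have := hminp win p' hWE j₀
  rw [hp'j₀] at this
  linarith
end

section
/- In a unit-demand market, every minimum Walrasian equilibrium (win, p) has a support order: an enumeration π_1,…,π_m of the items such that every item j with p_j > 0 has a supporter who either wins no item or wins an item appearing strictly after j in the enumeration. -/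
/-- `π` is a support order for `(win, p)`: an enumeration of the items such
that every item `j` with positive price has a supporter who either wins no item
or wins an item appearing strictly after `j` in the enumeration. -/
def SupportOrder {N M : Type*} [Fintype M] (v : N → M → ℝ) (win : M → N)
    (p : M → ℝ) (π : Fin (Fintype.card M) ≃ M) : Prop :=
  ∀ j, 0 < p j → ∃ i, Supports v win p i j ∧
    ((∀ k, win k ≠ i) ∨ ∃ k, win k = i ∧ π.symm j < π.symm k)

/-- Auxiliary: a list is good if each element with positive price has a
supporter winning nothing or winning an item in the tail. -/
def GoodList {N M : Type*} (v : N → M → ℝ) (win : M → N) (p : M → ℝ) :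
    List M → Prop
  | [] => True
  | j :: t => (0 < p j → ∃ i, Supports v win p i j ∧
      ((∀ k, win k ≠ i) ∨ ∃ k, win k = i ∧ k ∈ t)) ∧ GoodList v win p t

/-- Key lemma: in a minimum WE there is no nonempty set `S` of items, all with
positive price, such that every supporter of an item in `S` wins an item in
`S`. Otherwise prices on `S` could be uniformly lowered. -/
lemma minWE_no_stuck_set {N M : Type*} [Fintype N] [Fintype M]
    (v : N → M → ℝ) (win : M → N) (p : M → ℝ)
    (hmin : IsMinWE v win p) (S : Finset M) (hS : S.Nonempty)
    (h : ∀ j ∈ S, 0 < p j ∧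
      ∀ i, Supports v win p i j → ∃ k, win k = i ∧ k ∈ S) :
    False := by
  classical
  obtain ⟨⟨hinj, hp0, hIR, henvy, hloser⟩, hminp⟩ := hmin
  -- strict inequality for winners of items outside S against items in S
  have fact3 : ∀ j ∉ S, ∀ k ∈ S, v (win j) k - p k < v (win j) j - p j := by
    intro j hj k hk
    rcases lt_or_eq_of_le (henvy j k) with hlt | heq
    · exact hlt
    · exfalso
      have hjk : j ≠ k := fun e => hj (e ▸ hk)
      have hsupp : Supports v win p (win j) k := by
        refine ⟨fun e => hjk (hinj e), Or.inl ⟨j, rfl, heq.symm⟩⟩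
      obtain ⟨k', hk', hk'S⟩ := (h k hk).2 (win j) hsupp
      have : k' = j := hinj hk'
      exact hj (this ▸ hk'S)
  -- strict inequality for losers against items in S
  have fact4 : ∀ i, (∀ k, win k ≠ i) → ∀ k ∈ S, v i k < p k := by
    intro i hi k hk
    rcases lt_or_eq_of_le (hloser i hi k) with hlt | heq
    · exact hlt
    · exfalso
      have hsupp : Supports v win p i k := ⟨fun e => hi k e.symm, Or.inr ⟨hi, heq⟩⟩
      obtain ⟨k', hk', _⟩ := (h k hk).2 i hsupp
      exact hi k' hk'
  -- the finite set of positive slacks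
  set F : Finset ℝ :=
    S.image p ∪
      ((Finset.univ.filter (· ∉ S)) ×ˢ S).image
        (fun q => (v (win q.1) q.1 - p q.1) - (v (win q.1) q.2 - p q.2)) ∪
      ((Finset.univ.filter (fun i : N => ∀ k, win k ≠ i)) ×ˢ S).image
        (fun q => p q.2 - v q.1 q.2) with hF
  have hFne : F.Nonempty := by
    obtain ⟨j, hj⟩ := hS
    exact ⟨p j, by
      simp only [hF, Finset.mem_union, Finset.mem_image]
      exact Or.inl (Or.inl ⟨j, hj, rfl⟩)⟩
  have hFpos : ∀ x ∈ F, 0 < x := by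
    intro x hx
    simp only [hF, Finset.mem_union, Finset.mem_image, Finset.mem_product,
      Finset.mem_filter, Finset.mem_univ, true_and] at hx
    rcases hx with (⟨j, hj, rfl⟩ | ⟨⟨j, k⟩, ⟨hj, hk⟩, rfl⟩) | ⟨⟨i, k⟩, ⟨hi, hk⟩, rfl⟩
    · exact (h j hj).1
    · have := fact3 j hj k hk; linarith
    · have := fact4 i hi k hk; linarith
  set ε : ℝ := F.min' hFne with hεdef
  have hε : 0 < ε := hFpos _ (F.min'_mem hFne)
  have hεp : ∀ k ∈ S, ε ≤ p k := by
    intro k hk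
    exact F.min'_le _ (by
      simp only [hF, Finset.mem_union, Finset.mem_image]
      exact Or.inl (Or.inl ⟨k, hk, rfl⟩))
  have hεg : ∀ j ∉ S, ∀ k ∈ S,
      ε ≤ (v (win j) j - p j) - (v (win j) k - p k) := by
    intro j hj k hk
    exact F.min'_le _ (by
      simp only [hF, Finset.mem_union, Finset.mem_image, Finset.mem_product,
        Finset.mem_filter, Finset.mem_univ, true_and]
      exact Or.inl (Or.inr ⟨(j, k), ⟨hj, hk⟩, rfl⟩))
  have hεl : ∀ i, (∀ k, win k ≠ i) → ∀ k ∈ S, ε ≤ p k - v i k := by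
    intro i hi k hk
    exact F.min'_le _ (by
      simp only [hF, Finset.mem_union, Finset.mem_image, Finset.mem_product,
        Finset.mem_filter, Finset.mem_univ, true_and]
      exact Or.inr ⟨(i, k), ⟨hi, hk⟩, rfl⟩)
  -- the lowered prices
  set p' : M → ℝ := fun k => if k ∈ S then p k - ε else p k with hp'
  have hp'le : ∀ k, p' k ≤ p k := by
    intro k; simp only [hp']; split <;> linarith
  have hWE' : IsWE v win p' := by
    refine ⟨hinj, ?_, ?_, ?_, ?_⟩
    · intro j; simp only [hp']; split
      · have := hεp j (by assumption); linarith
      · exact hp0 j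
    · intro j; have := hIR j; have := hp'le j; linarith
    · intro j k
      by_cases hkS : k ∈ S
      · by_cases hjS : j ∈ S
        · simp only [hp', if_pos hkS, if_pos hjS]
          have := henvy j k; linarith
        · simp only [hp', if_pos hkS, if_neg hjS]
          have := hεg j hjS k hkS; linarith
      · simp only [hp', if_neg hkS]
        have h1 := henvy j k
        have h2 := hp'le j
        linarith
    · intro i hi j
      by_cases hjS : j ∈ S
      · simp only [hp', if_pos hjS]
        have := hεl i hi j hjS; linarith
      · simp only [hp', if_neg hjS]; exact hloser i hi j
  obtain ⟨j, hj⟩ := hS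
  have := hminp win p' hWE' j
  simp only [hp', if_pos hj] at this
  linarith

/-- Build good lists of every length up to `card M`. -/
lemma exists_goodList {N M : Type*} [Fintype N] [Fintype M]
    (v : N → M → ℝ) (win : M → N) (p : M → ℝ)
    (hmin : IsMinWE v win p) :
    ∀ n, n ≤ Fintype.card M →
      ∃ l : List M, l.Nodup ∧ l.length = n ∧ GoodList v win p l := by
  classical
  intro n
  induction n with
  | zero => exact fun _ => ⟨[], List.nodup_nil, rfl, trivial⟩
  | succ n ih =>
    intro hn
    obtain ⟨l, hnd, hlen, hgood⟩ := ih (Nat.le_of_succ_le hn)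
    set S : Finset M := l.toFinsetᶜ with hSdef
    have htc : l.toFinset.card = n := by
      rw [List.toFinset_card_of_nodup hnd, hlen]
    have hSne : S.Nonempty := by
      rw [← Finset.card_pos, Finset.card_compl, htc]
      omega
    by_cases hstuck : ∃ j ∈ S, p j = 0 ∨ ∃ i, Supports v win p i j ∧
        ((∀ k, win k ≠ i) ∨ ∃ k, win k = i ∧ k ∈ l)
    · obtain ⟨j, hjS, hj⟩ := hstuck
      have hjl : j ∉ l := by
        intro hjl
        rw [hSdef, Finset.mem_compl, List.mem_toFinset] at hjS
        exact hjS hjl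
      refine ⟨j :: l, List.nodup_cons.2 ⟨hjl, hnd⟩, by simp [hlen], ?_, hgood⟩
      intro hpj
      rcases hj with h0 | hj
      · exact absurd h0 (ne_of_gt hpj)
      · exact hj
    · exfalso
      apply minWE_no_stuck_set v win p hmin S hSne
      intro j hjS
      push_neg at hstuck
      obtain ⟨hpj, hrest⟩ := hstuck j hjS
      constructor
      · exact lt_of_le_of_ne (hmin.1.2.1 j) (Ne.symm hpj)
      · intro i hsupp
        have := hrest i hsupp
        obtain ⟨⟨k, hk⟩, h2⟩ := this
        refine ⟨k, hk, ?_⟩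
        rw [hSdef, Finset.mem_compl, List.mem_toFinset]
        exact h2 k hk

/-- From a good list, each element has a supporter winning nothing or an item
strictly later in the list. -/
lemma goodList_get {N M : Type*} (v : N → M → ℝ) (win : M → N) (p : M → ℝ) :
    ∀ l : List M, GoodList v win p l → ∀ n : Fin l.length,
      0 < p (l.get n) → ∃ i, Supports v win p i (l.get n) ∧
        ((∀ k, win k ≠ i) ∨
          ∃ k, win k = i ∧ ∃ m : Fin l.length, n < m ∧ l.get m = k) := by
  intro l
  induction l with
  | nil => intro _ n; exact absurd n.2 (by simp)
  | cons j t ih =>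
    intro hgood n
    refine Fin.cases ?_ ?_ n
    · intro hpj
      obtain ⟨i, hsupp, hcase⟩ := hgood.1 hpj
      refine ⟨i, hsupp, ?_⟩
      rcases hcase with hno | ⟨k, hwk, hkt⟩
      · exact Or.inl hno
      · obtain ⟨m0, hm0⟩ := List.mem_iff_get.1 hkt
        exact Or.inr ⟨k, hwk, m0.succ, Fin.succ_pos m0, hm0⟩
    · intro n' hp'
      obtain ⟨i, hsupp, hcase⟩ := ih hgood.2 n' hp'
      refine ⟨i, hsupp, ?_⟩
      rcases hcase with hno | ⟨k, hwk, m, hnm, hm⟩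
      · exact Or.inl hno
      · exact Or.inr ⟨k, hwk, m.succ, by simpa using hnm, hm⟩

/-- Every minimum Walrasian equilibrium of a unit-demand market has a support
order. -/
theorem minimum_walrasian_support_order {N M : Type*} [Fintype N] [Fintype M]
    (v : N → M → ℝ) (hv : ∀ i j, 0 ≤ v i j)
    (win : M → N) (p : M → ℝ)
    (hmin : IsMinWE v win p) :
    ∃ π : Fin (Fintype.card M) ≃ M, SupportOrder v win p π := by
  classical
  obtain ⟨l, hnd, hlen, hgood⟩ :=
    exists_goodList v win p hmin (Fintype.card M) le_rfl
  have hmem : ∀ a : M, a ∈ l := by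
    have : l.toFinset = Finset.univ := by
      apply Finset.eq_univ_of_card
      rw [List.toFinset_card_of_nodup hnd, hlen]
    intro a
    rw [← List.mem_toFinset, this]
    exact Finset.mem_univ a
  set e : Fin l.length ≃ M := hnd.getEquivOfForallMemList l hmem with he
  have heapp : ∀ m : Fin l.length, e m = l.get m := fun m => rfl
  set π : Fin (Fintype.card M) ≃ M := (finCongr hlen.symm).trans e with hπ
  refine ⟨π, ?_⟩
  intro j hpj
  have hgetj : l.get (e.symm j) = j := e.apply_symm_apply j
  obtain ⟨i, hsupp, hcase⟩ := goodList_get v win p l hgood (e.symm j)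
    (by rwa [hgetj])
  rw [hgetj] at hsupp
  refine ⟨i, hsupp, ?_⟩
  rcases hcase with hno | ⟨k, hwk, m, hnm, hm⟩
  · exact Or.inl hno
  · refine Or.inr ⟨k, hwk, ?_⟩
    have hesk : e.symm k = m := by
      apply e.injective
      rw [e.apply_symm_apply, heapp, hm]
    have hπj : π.symm j = (finCongr hlen.symm).symm (e.symm j) := rfl
    have hπk : π.symm k = (finCongr hlen.symm).symm (e.symm k) := rfl
    rw [hπj, hπk, hesk]
    simp only [finCongr_symm, finCongr_apply, Fin.lt_def, Fin.coe_cast]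
    exact hnm
end

section
/- In a unit-demand market, let (win, p) be a minimum Walrasian equilibrium admitting a support order π, let f = π_1 be the first item in the support order, and let w = win(f). Let t be any buyer with t ≠ w, and consider the residual unit-demand market on the items M \ {f} with residual values v'_{i,j} = v_{i,j} for every buyer i ≠ t and v'_{t,j} = max(0, v_{t,j} − v_{t,f}). Let (win', p') be any minimum Walrasian equilibrium of this residual market. Then buyer w weakly prefers winning f at price p_f: v_{w,f} − p_f ≥ u', where u' = v_{w,g} − p'_g if win'(g) = w for some item g ∈ M \ {f}, and u' = 0 if w wins no item in (win', p'). -/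
/-- Rotation lemma: starting from a vacated item `cur` at position at least that of `kt`
(both positive), we can rematch the suffix items (minus possibly one zero-priced item)
avoiding the buyers `win f`, `win kt`, `win cur`, losing at most `v (win cur) cur - p cur`. -/
lemma rot_lemma
    {N M : Type*} [Fintype N] [Fintype M] [DecidableEq M] [DecidableEq N]
    (v : N → M → ℝ) (win : M → N) (p : M → ℝ)
    (inj : Function.Injective win) (hp : ∀ j, 0 ≤ p j)
    (π : Fin (Fintype.card M) ≃ M)
    (hπ : SupportOrder v win p π)
    (f kt : M) (hktf : kt ≠ f) (hposf : (π.symm f : ℕ) = 0) :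
    ∀ n : ℕ, ∀ cur : M, ((π.symm kt : ℕ) ≤ (π.symm cur : ℕ)) →
      (Fintype.card M ≤ n + (π.symm cur : ℕ)) →
    ∃ (s : Finset M) (x : M → N),
      (∀ j ∈ s, (π.symm cur : ℕ) ≤ (π.symm j : ℕ)) ∧
      (∀ j1 ∈ s, ∀ j2 ∈ s, x j1 = x j2 → j1 = j2) ∧
      (∀ j ∈ s, x j ≠ win f) ∧ (∀ j ∈ s, x j ≠ win kt) ∧ (∀ j ∈ s, x j ≠ win cur) ∧
      (∀ j ∈ s, ∀ k, win k = x j → (π.symm cur : ℕ) ≤ (π.symm k : ℕ)) ∧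
      (∑ j ∈ Finset.univ.filter (fun j => (π.symm cur : ℕ) ≤ (π.symm j : ℕ)), v (win j) j)
        - v (win cur) cur + p cur ≤ ∑ j ∈ s, v (x j) j := by
  have hposinj : ∀ a b : M, (π.symm a : ℕ) = (π.symm b : ℕ) → a = b := by
    intro a b h
    have : π.symm a = π.symm b := Fin.ext h
    exact π.symm.injective this
  have hktpos : 0 < (π.symm kt : ℕ) := by
    rcases Nat.eq_zero_or_pos (π.symm kt : ℕ) with h | h
    · exact absurd (hposinj kt f (by rw [h, hposf])) hktf
    · exact h
  intro n
  induction n with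
  | zero =>
    intro cur _ hcard
    have := (π.symm cur).isLt
    omega
  | succ n ih =>
    intro cur hcur hcard
    have hcurpos : 0 < (π.symm cur : ℕ) := lt_of_lt_of_le hktpos hcur
    -- facts about suffix membership
    have hne_f : ∀ j : M, (π.symm cur : ℕ) ≤ (π.symm j : ℕ) → win j ≠ win f := by
      intro j hj hwj
      have : j = f := inj hwj
      subst this
      omega
    have hne_kt : ∀ j : M, (π.symm cur : ℕ) ≤ (π.symm j : ℕ) → j ≠ cur → win j ≠ win kt := by
      intro j hj hjc hwj
      have hjkt : j = kt := inj hwj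
      subst hjkt
      exact hjc (hposinj j cur (le_antisymm hcur hj))
    rcases (hp cur).lt_or_eq with hpc | hpc
    · -- positive price: get supporter
      obtain ⟨i, ⟨hine, hdisj⟩, hlat⟩ := hπ cur hpc
      rcases hlat with hloser | ⟨nxt, hnxt, hlt⟩
      · -- supporter wins nothing
        have hvcur : v i cur = p cur := by
          rcases hdisj with ⟨k, hk, _⟩ | ⟨_, h⟩
          · exact absurd hk (hloser k)
          · exact h
        set x : M → N := fun j => if j = cur then i else win j with hxdef
        have hxcur : x cur = i := by rw [hxdef]; simp
        have hxne : ∀ j, j ≠ cur → x j = win j := by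
          intro j hj; rw [hxdef]; simp [hj]
        have hmem : cur ∈ Finset.univ.filter
            (fun j => (π.symm cur : ℕ) ≤ (π.symm j : ℕ)) :=
          Finset.mem_filter.mpr ⟨Finset.mem_univ _, le_refl _⟩
        refine ⟨Finset.univ.filter (fun j => (π.symm cur : ℕ) ≤ (π.symm j : ℕ)),
          x, ?_, ?_, ?_, ?_, ?_, ?_, ?_⟩
        · intro j hj; exact (Finset.mem_filter.mp hj).2
        · intro j1 h1 j2 h2 heq
          by_cases e1 : j1 = cur <;> by_cases e2 : j2 = cur
          · rw [e1, e2]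
          · subst e1; rw [hxcur, hxne j2 e2] at heq
            exact absurd heq.symm (hloser j2)
          · subst e2; rw [hxcur, hxne j1 e1] at heq
            exact absurd heq (hloser j1)
          · rw [hxne j1 e1, hxne j2 e2] at heq; exact inj heq
        · intro j hj
          by_cases e : j = cur
          · subst e; rw [hxcur]; intro h; exact hloser f h.symm
          · rw [hxne j e]; exact hne_f j (Finset.mem_filter.mp hj).2
        · intro j hj
          by_cases e : j = cur
          · subst e; rw [hxcur]; intro h; exact hloser kt h.symm
          · rw [hxne j e]; exact hne_kt j (Finset.mem_filter.mp hj).2 e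
        · intro j hj
          by_cases e : j = cur
          · subst e; rw [hxcur]; exact hine
          · rw [hxne j e]; intro h; exact e (inj h)
        · intro j hj k hk
          by_cases e : j = cur
          · subst e; rw [hxcur] at hk; exact absurd hk (hloser k)
          · rw [hxne j e] at hk
            have : k = j := inj hk
            rw [this]; exact (Finset.mem_filter.mp hj).2
        · -- value
          have hsx : ∑ j ∈ Finset.univ.filter
              (fun j => (π.symm cur : ℕ) ≤ (π.symm j : ℕ)), v (x j) j
              = v i cur + ∑ j ∈ (Finset.univ.filter
              (fun j => (π.symm cur : ℕ) ≤ (π.symm j : ℕ))).erase cur, v (win j) j := by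
            rw [← Finset.sum_erase_add _ (fun j => v (x j) j) hmem, hxcur]
            have hcg : ∀ j ∈ (Finset.univ.filter
                (fun j => (π.symm cur : ℕ) ≤ (π.symm j : ℕ))).erase cur,
                v (x j) j = v (win j) j := by
              intro j hj; rw [hxne j (Finset.mem_erase.mp hj).1]
            rw [Finset.sum_congr rfl hcg]; ring
          have hsw : ∑ j ∈ (Finset.univ.filter
              (fun j => (π.symm cur : ℕ) ≤ (π.symm j : ℕ))).erase cur, v (win j) j
              + v (win cur) cur
              = ∑ j ∈ Finset.univ.filter
              (fun j => (π.symm cur : ℕ) ≤ (π.symm j : ℕ)), v (win j) j :=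
            Finset.sum_erase_add _ _ hmem
          rw [hsx]
          linarith
      · -- supporter wins nxt (later)
        have hik : v i nxt - p nxt = v i cur - p cur := by
          rcases hdisj with ⟨k, hk, he⟩ | ⟨hnw, _⟩
          · have hke : k = nxt := inj (hk.trans hnxt.symm)
            rw [← hke]; exact he
          · exact absurd hnxt (hnw nxt)
        have hltv : (π.symm cur : ℕ) < (π.symm nxt : ℕ) := hlt
        have hnxtcard : Fintype.card M ≤ n + (π.symm nxt : ℕ) := by
          have := (π.symm nxt).isLt
          omega
        obtain ⟨s', x', hpos', hinj', hxf', hxt', hvac', hB4', hval'⟩ :=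
          ih nxt (le_trans hcur (le_of_lt hltv)) hnxtcard
        set mid := Finset.univ.filter
          (fun j => (π.symm cur : ℕ) < (π.symm j : ℕ) ∧ (π.symm j : ℕ) < (π.symm nxt : ℕ))
          with hmid
        have hmidpos : ∀ j ∈ mid, (π.symm cur : ℕ) < (π.symm j : ℕ) ∧
            (π.symm j : ℕ) < (π.symm nxt : ℕ) := by
          intro j hj; exact (Finset.mem_filter.mp hj).2
        have hcur_s' : cur ∉ s' := by
          intro h
          have := hpos' cur h
          omega
        have hdisj_ms : Disjoint mid s' := by
          rw [Finset.disjoint_left]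
          intro a ha has
          have h1 := (hmidpos a ha)
          have h2 := hpos' a has
          omega
        have hcur_notin : cur ∉ mid ∪ s' := by
          rw [Finset.mem_union]; rintro (h | h)
          · have := hmidpos cur h; omega
          · exact hcur_s' h
        set x : M → N := fun j => if j = cur then i else if j ∈ s' then x' j else win j
          with hxdef
        have hxcur : x cur = i := by rw [hxdef]; simp
        have hxs' : ∀ j ∈ s', x j = x' j := by
          intro j hj
          rw [hxdef]
          have : j ≠ cur := fun e => hcur_s' (e ▸ hj)
          simp [this, hj]
        have hxmid : ∀ j ∈ mid, x j = win j := by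
          intro j hj
          have h1 := hmidpos j hj
          have hne : j ≠ cur := fun e => by subst e; omega
          have hns : j ∉ s' := Finset.disjoint_left.mp hdisj_ms hj
          rw [hxdef]; simp [hne, hns]
        refine ⟨insert cur (mid ∪ s'), x, ?_, ?_, ?_, ?_, ?_, ?_, ?_⟩
        · intro j hj
          rcases Finset.mem_insert.mp hj with h | h
          · rw [h]
          · rcases Finset.mem_union.mp h with h | h
            · exact le_of_lt (hmidpos j h).1
            · exact le_trans (le_of_lt hltv) (hpos' j h)
        · -- injectivity
          have key : ∀ j1 ∈ mid ∪ s', x j1 ≠ i := by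
            intro j1 h1 heq
            rcases Finset.mem_union.mp h1 with hm | hs
            · rw [hxmid j1 hm] at heq
              have : j1 = nxt := inj (heq.trans hnxt.symm)
              subst this
              have := hmidpos j1 hm
              omega
            · rw [hxs' j1 hs] at heq
              exact hvac' j1 hs (by rw [heq, hnxt])
          intro j1 h1 j2 h2 heq
          rcases Finset.mem_insert.mp h1 with e1 | m1 <;>
            rcases Finset.mem_insert.mp h2 with e2 | m2
          · rw [e1, e2]
          · subst e1; rw [hxcur] at heq
            exact absurd heq.symm (key j2 m2)
          · subst e2; rw [hxcur] at heq
            exact absurd heq (key j1 m1)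
          · rcases Finset.mem_union.mp m1 with s1 | s1 <;>
              rcases Finset.mem_union.mp m2 with s2 | s2
            · rw [hxmid j1 s1, hxmid j2 s2] at heq; exact inj heq
            · exfalso
              rw [hxmid j1 s1, hxs' j2 s2] at heq
              have := hB4' j2 s2 j1 heq
              have h2m := hmidpos j1 s1
              omega
            · exfalso
              rw [hxs' j1 s1, hxmid j2 s2] at heq
              have := hB4' j1 s1 j2 heq.symm
              have h2m := hmidpos j2 s2
              omega
            · rw [hxs' j1 s1, hxs' j2 s2] at heq; exact hinj' j1 s1 j2 s2 heq
        · -- ≠ win f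
          intro j hj
          rcases Finset.mem_insert.mp hj with e | m
          · subst e; rw [hxcur, ← hnxt]
            intro h
            have : nxt = f := inj h
            subst this
            omega
          · rcases Finset.mem_union.mp m with hm | hs
            · rw [hxmid j hm]
              exact hne_f j (le_of_lt (hmidpos j hm).1)
            · rw [hxs' j hs]; exact hxf' j hs
        · -- ≠ win kt
          intro j hj
          rcases Finset.mem_insert.mp hj with e | m
          · subst e; rw [hxcur, ← hnxt]
            intro h
            have : nxt = kt := inj h
            subst this
            omega
          · rcases Finset.mem_union.mp m with hm | hs
            · rw [hxmid j hm]
              have h1 := (hmidpos j hm).1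
              exact hne_kt j (le_of_lt h1) (fun e => by subst e; omega)
            · rw [hxs' j hs]; exact hxt' j hs
        · -- ≠ win cur
          intro j hj
          rcases Finset.mem_insert.mp hj with e | m
          · subst e; rw [hxcur]; exact hine
          · rcases Finset.mem_union.mp m with hm | hs
            · rw [hxmid j hm]
              intro h
              have : j = cur := inj h
              subst this
              have := hmidpos j hm
              omega
            · rw [hxs' j hs]
              intro h
              have := hB4' j hs cur h.symm
              omega
        · -- B4
          intro j hj k hk
          rcases Finset.mem_insert.mp hj with e | m
          · subst e; rw [hxcur] at hk
            have : k = nxt := inj (hk.trans hnxt.symm)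
            rw [this]; exact le_of_lt hltv
          · rcases Finset.mem_union.mp m with hm | hs
            · rw [hxmid j hm] at hk
              have : k = j := inj hk
              rw [this]
              exact le_of_lt (hmidpos j hm).1
            · rw [hxs' j hs] at hk
              exact le_trans (le_of_lt hltv) (hB4' j hs k hk)
        · -- value
          have hmemcur : cur ∈ Finset.univ.filter
              (fun j => (π.symm cur : ℕ) ≤ (π.symm j : ℕ)) :=
            Finset.mem_filter.mpr ⟨Finset.mem_univ _, le_refl _⟩
          have hsplit : (Finset.univ.filter
              (fun j => (π.symm cur : ℕ) ≤ (π.symm j : ℕ))).erase cur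
              = mid ∪ Finset.univ.filter (fun j => (π.symm nxt : ℕ) ≤ (π.symm j : ℕ)) := by
            ext j
            simp only [Finset.mem_erase, Finset.mem_filter, Finset.mem_union, Finset.mem_univ,
              true_and, hmid]
            constructor
            · rintro ⟨hne, hle⟩
              have : (π.symm cur : ℕ) < (π.symm j : ℕ) := by
                rcases lt_or_eq_of_le hle with h | h
                · exact h
                · exact absurd (hposinj j cur h.symm) hne
              omega
            · rintro (⟨h1, _⟩ | h1)
              · exact ⟨fun e => by subst e; omega, le_of_lt h1⟩
              · constructor
                · intro e; subst e; omega
                · omega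
          have hdisj_mSUF : Disjoint mid
              (Finset.univ.filter (fun j => (π.symm nxt : ℕ) ≤ (π.symm j : ℕ))) := by
            rw [Finset.disjoint_left]
            intro a ha has
            have h1 := hmidpos a ha
            have h2 := (Finset.mem_filter.mp has).2
            omega
          have hW : ∑ j ∈ Finset.univ.filter
              (fun j => (π.symm cur : ℕ) ≤ (π.symm j : ℕ)), v (win j) j
              = v (win cur) cur + (∑ j ∈ mid, v (win j) j
                + ∑ j ∈ Finset.univ.filter
                  (fun j => (π.symm nxt : ℕ) ≤ (π.symm j : ℕ)), v (win j) j) := by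
            rw [← Finset.sum_erase_add _ (fun j => v (win j) j) hmemcur, hsplit,
              Finset.sum_union hdisj_mSUF]
            ring
          have hX : ∑ j ∈ insert cur (mid ∪ s'), v (x j) j
              = v i cur + (∑ j ∈ mid, v (win j) j + ∑ j ∈ s', v (x' j) j) := by
            rw [Finset.sum_insert hcur_notin, Finset.sum_union hdisj_ms, hxcur]
            have c1 : ∀ j ∈ mid, v (x j) j = v (win j) j := fun j hj => by rw [hxmid j hj]
            have c2 : ∀ j ∈ s', v (x j) j = v (x' j) j := fun j hj => by rw [hxs' j hj]
            rw [Finset.sum_congr rfl c1, Finset.sum_congr rfl c2]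
          rw [hW, hX]
          have hvnxt : v (win nxt) nxt = v i nxt := by rw [hnxt]
          rw [hvnxt] at hval'
          linarith
    · -- zero price: drop cur
      refine ⟨(Finset.univ.filter (fun j => (π.symm cur : ℕ) ≤ (π.symm j : ℕ))).erase cur,
        win, ?_, ?_, ?_, ?_, ?_, ?_, ?_⟩
      · intro j hj; exact (Finset.mem_filter.mp (Finset.mem_erase.mp hj).2).2
      · intro j1 _ j2 _ heq; exact inj heq
      · intro j hj
        exact hne_f j (Finset.mem_filter.mp (Finset.mem_erase.mp hj).2).2
      · intro j hj
        exact hne_kt j (Finset.mem_filter.mp (Finset.mem_erase.mp hj).2).2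
          (Finset.mem_erase.mp hj).1
      · intro j hj
        intro h
        exact (Finset.mem_erase.mp hj).1 (inj h)
      · intro j hj k hk
        have : k = j := inj hk
        rw [this]
        exact (Finset.mem_filter.mp (Finset.mem_erase.mp hj).2).2
      · have hmem : cur ∈ Finset.univ.filter
            (fun j => (π.symm cur : ℕ) ≤ (π.symm j : ℕ)) :=
          Finset.mem_filter.mpr ⟨Finset.mem_univ _, le_refl _⟩
        rw [← Finset.sum_erase_add _ (fun j => v (win j) j) hmem]
        linarith

/-- Let `(win, p)` be a minimum Walrasian equilibrium with a support order `π`,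
let `f = π 1` be the first item in the support order, and `w = win f`.  If any
other buyer `t` takes `f` instead, then in any minimum Walrasian equilibrium
`(win', p')` of the residual market on `M \ {f}` — with values
`v' t j = max 0 (v t j - v t f)` and `v' i j = v i j` for `i ≠ t` — buyer `w`
weakly prefers winning `f` at price `p f` to his residual outcome. -/
theorem winner_prefers_first_item {N M : Type*} [Fintype N] [Fintype M]
    [DecidableEq M] [DecidableEq N]
    (v : N → M → ℝ) (hv : ∀ i j, 0 ≤ v i j)
    (win : M → N) (p : M → ℝ)
    (hmin : IsMinWE v win p)
    (hm : 0 < Fintype.card M)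
    (π : Fin (Fintype.card M) ≃ M)
    (hπ : SupportOrder v win p π)
    (f : M) (hf : f = π ⟨0, hm⟩)
    (w : N) (hw : w = win f)
    (t : N) (ht : t ≠ w)
    (v' : N → {j : M // j ≠ f} → ℝ)
    (hv' : ∀ i j, v' i j = if i = t then max 0 (v t j - v t f) else v i j)
    (win' : {j : M // j ≠ f} → N) (p' : {j : M // j ≠ f} → ℝ)
    (hmin' : IsMinWE v' win' p') :
    (∀ g : {j : M // j ≠ f}, win' g = w → v w g - p' g ≤ v w f - p f) ∧
    ((∀ g : {j : M // j ≠ f}, win' g ≠ w) → 0 ≤ v w f - p f) := by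
  classical
  obtain ⟨⟨inj, hp, hir, hopt, hlose⟩, -⟩ := hmin
  obtain ⟨⟨inj', hp', hir', hopt', hlose'⟩, -⟩ := hmin'
  have hposf : (π.symm f : ℕ) = 0 := by rw [hf]; simp
  constructor
  swap
  · intro _
    have := hir f
    rw [← hw] at this
    exact this
  intro g hgw
  -- original utilities
  set u : N → ℝ := fun i => if h : ∃ k, win k = i then v i h.choose - p h.choose else 0
    with hudef
  have hu_eq : ∀ k, u (win k) = v (win k) k - p k := by
    intro k
    have hex : ∃ k', win k' = win k := ⟨k, rfl⟩
    rw [hudef]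
    simp only [dif_pos hex]
    have h1 : hex.choose = k := inj hex.choose_spec
    rw [h1]
  have hu0 : ∀ i, 0 ≤ u i := by
    intro i
    rw [hudef]
    by_cases h : ∃ k, win k = i
    · simp only [dif_pos h]
      have := hir h.choose
      rw [h.choose_spec] at this
      exact this
    · simp only [dif_neg h]; exact le_refl 0
  have hu_opt : ∀ i j, v i j - p j ≤ u i := by
    intro i j
    by_cases h : ∃ k, win k = i
    · obtain ⟨k, hk⟩ := h
      rw [← hk, hu_eq k]
      exact hopt k j
    · rw [hudef]
      simp only [dif_neg h]
      have := hlose i (fun k hk => h ⟨k, hk⟩) j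
      linarith
  have hu_lose : ∀ i, (¬ ∃ k, win k = i) → u i = 0 := by
    intro i h; rw [hudef]; simp only [dif_neg h]
  -- residual utilities
  set z : N → ℝ := fun i => if h : ∃ k, win' k = i then v' i h.choose - p' h.choose else 0
    with hzdef
  have hz_eq : ∀ k, z (win' k) = v' (win' k) k - p' k := by
    intro k
    have hex : ∃ k', win' k' = win' k := ⟨k, rfl⟩
    rw [hzdef]
    simp only [dif_pos hex]
    have h1 : hex.choose = k := inj' hex.choose_spec
    rw [h1]
  have hz0 : ∀ i, 0 ≤ z i := by
    intro i
    rw [hzdef]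
    by_cases h : ∃ k, win' k = i
    · simp only [dif_pos h]
      have := hir' h.choose
      rw [h.choose_spec] at this
      exact this
    · simp only [dif_neg h]; exact le_refl 0
  have hz_opt : ∀ i j, v' i j - p' j ≤ z i := by
    intro i j
    by_cases h : ∃ k, win' k = i
    · obtain ⟨k, hk⟩ := h
      rw [← hk, hz_eq k]
      exact hopt' k j
    · rw [hzdef]
      simp only [dif_neg h]
      have := hlose' i (fun k hk => h ⟨k, hk⟩) j
      linarith
  have hz_lose : ∀ i, (¬ ∃ k, win' k = i) → z i = 0 := by
    intro i h; rw [hzdef]; simp only [dif_neg h]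
  have hzw : z w = v w g - p' g := by
    rw [← hgw, hz_eq g, hgw, hv']
    rw [if_neg (fun h => ht h.symm)]
  -- abbreviations
  set c : ℝ := v t f with hcdef
  set V2 : N → M → ℝ := fun i j => if i = t then max 0 (v t j - c) else v i j with hV2def
  have hV2eq : ∀ (i : N) (j : M) (h : j ≠ f), v' i ⟨j, h⟩ = V2 i j := by
    intro i j h
    rw [hv', hV2def]
  set P2 : M → ℝ := fun j => if h : j ≠ f then p' ⟨j, h⟩ else 0 with hP2def
  have hP2eq : ∀ (j : M) (h : j ≠ f), P2 j = p' ⟨j, h⟩ := by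
    intro j h; rw [hP2def]; simp only [dif_pos h]
  have hP20 : ∀ j, 0 ≤ P2 j := by
    intro j
    rw [hP2def]
    by_cases h : j ≠ f
    · simp only [dif_pos h]; exact hp' _
    · simp only [dif_neg h]; exact le_refl 0
  set W2 : M → N := fun j => if h : j ≠ f then win' ⟨j, h⟩ else w with hW2def
  have hW2eq : ∀ (j : M) (h : j ≠ f), W2 j = win' ⟨j, h⟩ := by
    intro j h; rw [hW2def]; simp only [dif_pos h]
  -- the y dual
  set y : N → ℝ := Function.update u t (max 0 (u t - c)) with hydef
  have hy0 : ∀ i, 0 ≤ y i := by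
    intro i
    rw [hydef]
    by_cases h : i = t
    · subst h; rw [Function.update_self]; exact le_max_left _ _
    · rw [Function.update_of_ne h]; exact hu0 i
  have hyfeas : ∀ (i : N) (j : M), V2 i j ≤ y i + p j := by
    intro i j
    simp only [hV2def, hydef]
    by_cases h : i = t
    · rw [if_pos h, h, Function.update_self]
      apply max_le
      · have := le_max_left (0:ℝ) (u t - c)
        have := hp j
        linarith
      · have h1 := hu_opt t j
        have h2 := le_max_right (0:ℝ) (u t - c)
        linarith
    · rw [if_neg h, Function.update_of_ne h]
      have := hu_opt i j
      linarith
  -- anchor sums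
  have hAf : ∑ j ∈ Finset.univ.erase f, v (win j) j = (∑ j, v (win j) j) - v w f := by
    have := Finset.sum_erase_add Finset.univ (fun j => v (win j) j) (Finset.mem_univ f)
    rw [hw]
    linarith
  -- KEY: construct a matching on M minus f avoiding w with large damped value
  have key : ∃ (s : Finset M) (x : M → N),
      (∀ j ∈ s, j ≠ f) ∧ (∀ j1 ∈ s, ∀ j2 ∈ s, x j1 = x j2 → j1 = j2) ∧
      (∀ j ∈ s, x j ≠ w) ∧
      ((∑ j, v (win j) j) - v w f - min (u t) c ≤ ∑ j ∈ s, V2 (x j) j) := by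
    by_cases hex : ∃ k, win k = t
    · obtain ⟨kt, hkt⟩ := hex
      have hktf : kt ≠ f := by
        intro e; rw [e, ← hw] at hkt; exact ht hkt.symm
      have hut : u t = v t kt - p kt := by rw [← hkt, hu_eq]
      rcases le_total c (u t) with hca | hca
      · -- c ≤ u t : keep t at kt
        refine ⟨Finset.univ.erase f, win, ?_, ?_, ?_, ?_⟩
        · intro j hj; exact (Finset.mem_erase.mp hj).1
        · intro j1 _ j2 _ h; exact inj h
        · intro j hj h
          exact (Finset.mem_erase.mp hj).1 (inj (by rw [h]; exact hw))
        · have hktmem : kt ∈ Finset.univ.erase f :=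
            Finset.mem_erase.mpr ⟨hktf, Finset.mem_univ _⟩
          rw [← Finset.sum_erase_add _ (fun j => V2 (win j) j) hktmem]
          have hrest : ∀ j ∈ (Finset.univ.erase f).erase kt, V2 (win j) j = v (win j) j := by
            intro j hj
            have hwj : win j ≠ t := by
              intro h
              exact (Finset.mem_erase.mp hj).1 (inj (by rw [h, ← hkt]))
            simp only [hV2def, if_neg hwj]
          rw [Finset.sum_congr rfl hrest]
          have h2 : ∑ j ∈ (Finset.univ.erase f).erase kt, v (win j) j
              = (∑ j ∈ Finset.univ.erase f, v (win j) j) - v t kt := by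
            have := Finset.sum_erase_add (Finset.univ.erase f)
              (fun j => v (win j) j) hktmem
            rw [← hkt]
            linarith
          have h3 : V2 (win kt) kt = max 0 (v t kt - c) := by
            rw [hkt]; simp only [hV2def, if_pos rfl]
          rw [h2, h3, hAf]
          have h4 : v t kt - c ≤ max 0 (v t kt - c) := le_max_right _ _
          rw [min_eq_right hca]
          linarith
      · -- u t ≤ c : rotate t out
        obtain ⟨s, x, hposS, hinjS, hxf, hxkt, -, hB4, hval⟩ :=
          rot_lemma v win p inj hp π hπ f kt hktf hposf (Fintype.card M) kt (le_refl _)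
            (Nat.le_add_right _ _)
        have hkt0 : 0 < (π.symm kt : ℕ) := by
          rcases Nat.eq_zero_or_pos (π.symm kt : ℕ) with h0 | h0
          · exact absurd (π.symm.injective (Fin.ext (by rw [h0, hposf]))) hktf
          · exact h0
        set PRE := (Finset.univ.erase f).filter
          (fun j => ¬ ((π.symm kt : ℕ) ≤ (π.symm j : ℕ))) with hPRE
        set SUF := Finset.univ.filter
          (fun j => (π.symm kt : ℕ) ≤ (π.symm j : ℕ)) with hSUF
        have hsplitEF : (Finset.univ.erase f).filter
            (fun j => (π.symm kt : ℕ) ≤ (π.symm j : ℕ)) = SUF := by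
          ext j
          simp only [hSUF, Finset.mem_filter, Finset.mem_erase, Finset.mem_univ, true_and,
            and_true]
          constructor
          · rintro ⟨_, h⟩; exact h
          · intro h
            refine ⟨?_, h⟩
            intro e; rw [e, hposf] at h; omega
        have hEFsplit : ∑ j ∈ Finset.univ.erase f, v (win j) j
            = (∑ j ∈ SUF, v (win j) j) + ∑ j ∈ PRE, v (win j) j := by
          rw [hPRE, ← hsplitEF]
          exact (Finset.sum_filter_add_sum_filter_not (Finset.univ.erase f) _ _).symm
        have hdisjPS : Disjoint PRE s := by
          rw [Finset.disjoint_left]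
          intro a ha has
          have h1 := (Finset.mem_filter.mp ha).2
          exact h1 (hposS a has)
        set xT : M → N := fun j => if j ∈ s then x j else win j with hxT
        have hxT1 : ∀ j ∈ s, xT j = x j := by
          intro j hj; rw [hxT]; simp only [if_pos hj]
        have hxT2 : ∀ j ∈ PRE, xT j = win j := by
          intro j hj
          rw [hxT]
          simp only [if_neg (Finset.disjoint_left.mp hdisjPS hj)]
        refine ⟨PRE ∪ s, xT, ?_, ?_, ?_, ?_⟩
        · intro j hj
          rcases Finset.mem_union.mp hj with h | h
          · exact (Finset.mem_erase.mp (Finset.mem_filter.mp h).1).1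
          · intro e
            have := hposS j h
            rw [e, hposf] at this
            omega
        · intro j1 h1 j2 h2 heq
          rcases Finset.mem_union.mp h1 with m1 | m1 <;>
            rcases Finset.mem_union.mp h2 with m2 | m2
          · rw [hxT2 j1 m1, hxT2 j2 m2] at heq; exact inj heq
          · exfalso
            rw [hxT2 j1 m1, hxT1 j2 m2] at heq
            have := hB4 j2 m2 j1 heq
            exact (Finset.mem_filter.mp m1).2 this
          · exfalso
            rw [hxT1 j1 m1, hxT2 j2 m2] at heq
            have := hB4 j1 m1 j2 heq.symm
            exact (Finset.mem_filter.mp m2).2 this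
          · rw [hxT1 j1 m1, hxT1 j2 m2] at heq; exact hinjS j1 m1 j2 m2 heq
        · intro j hj
          rcases Finset.mem_union.mp hj with m | m
          · rw [hxT2 j m]
            intro h
            exact (Finset.mem_erase.mp (Finset.mem_filter.mp m).1).1
              (inj (by rw [h]; exact hw))
          · rw [hxT1 j m, hw]
            exact hxf j m
        · -- value
          have hUsum : ∑ j ∈ PRE ∪ s, V2 (xT j) j
              = (∑ j ∈ PRE, v (win j) j) + ∑ j ∈ s, v (x j) j := by
            rw [Finset.sum_union hdisjPS]
            have c1 : ∀ j ∈ PRE, V2 (xT j) j = v (win j) j := by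
              intro j hj
              rw [hxT2 j hj]
              have hwj : win j ≠ t := by
                intro h
                have : j = kt := inj (by rw [h, ← hkt])
                rw [this] at hj
                exact (Finset.mem_filter.mp hj).2 (le_refl _)
              simp only [hV2def, if_neg hwj]
            have c2 : ∀ j ∈ s, V2 (xT j) j = v (x j) j := by
              intro j hj
              rw [hxT1 j hj]
              have hwj : x j ≠ t := by rw [← hkt]; exact hxkt j hj
              simp only [hV2def, if_neg hwj]
            rw [Finset.sum_congr rfl c1, Finset.sum_congr rfl c2]
          rw [hUsum]
          rw [hkt] at hval
          rw [min_eq_left hca, hut]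
          have : (∑ j ∈ SUF, v (win j) j) - v t kt + p kt ≤ ∑ j ∈ s, v (x j) j := hval
          linarith [hEFsplit, hAf]
    · -- t is a loser
      refine ⟨Finset.univ.erase f, win, ?_, ?_, ?_, ?_⟩
      · intro j hj; exact (Finset.mem_erase.mp hj).1
      · intro j1 _ j2 _ h; exact inj h
      · intro j hj h
        exact (Finset.mem_erase.mp hj).1 (inj (by rw [h]; exact hw))
      · have hrest : ∀ j ∈ Finset.univ.erase f, V2 (win j) j = v (win j) j := by
          intro j _
          have hwj : win j ≠ t := fun h => hex ⟨j, h⟩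
          simp only [hV2def, if_neg hwj]
        rw [Finset.sum_congr rfl hrest, hAf]
        have h1 : u t = 0 := hu_lose t hex
        have h2 : min (u t) c = 0 := by
          rw [h1]
          exact min_eq_left (hv t f)
        rw [h2]
        linarith
  -- ASSEMBLY
  obtain ⟨s, x, hsf, hinjx, hxw, hval⟩ := key
  have hα1 : ∀ j ∈ s, V2 (x j) j ≤ z (x j) + P2 j := by
    intro j hj
    have hne := hsf j hj
    rw [← hV2eq (x j) j hne, hP2eq j hne]
    have := hz_opt (x j) ⟨j, hne⟩
    linarith
  have hα2 : ∑ j ∈ s, V2 (x j) j ≤ (∑ j ∈ s, z (x j)) + ∑ j ∈ s, P2 j := by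
    have := Finset.sum_le_sum hα1
    rw [Finset.sum_add_distrib] at this
    exact this
  have hα3 : ∑ j ∈ s, z (x j) ≤ ∑ i ∈ Finset.univ.erase w, z i := by
    have himg : ∑ i ∈ s.image x, z i = ∑ j ∈ s, z (x j) :=
      Finset.sum_image (fun a ha b hb h => hinjx a ha b hb h)
    rw [← himg]
    apply Finset.sum_le_sum_of_subset_of_nonneg
    · intro i hi
      obtain ⟨j, hj, rfl⟩ := Finset.mem_image.mp hi
      exact Finset.mem_erase.mpr ⟨hxw j hj, Finset.mem_univ _⟩
    · intro i _ _; exact hz0 i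
  have hα4 : ∑ j ∈ s, P2 j ≤ ∑ j ∈ Finset.univ.erase f, P2 j := by
    apply Finset.sum_le_sum_of_subset_of_nonneg
    · intro j hj; exact Finset.mem_erase.mpr ⟨hsf j hj, Finset.mem_univ _⟩
    · intro j _ _; exact hP20 j
  have hzsum : ∑ i ∈ Finset.univ.erase w, z i = (∑ i, z i) - z w := by
    have := Finset.sum_erase_add Finset.univ z (Finset.mem_univ w)
    linarith
  -- residual identity
  have hβpoint : ∀ j ∈ Finset.univ.erase f, V2 (W2 j) j = z (W2 j) + P2 j := by
    intro j hj
    have hne : j ≠ f := (Finset.mem_erase.mp hj).1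
    rw [hW2eq j hne, hP2eq j hne, hz_eq ⟨j, hne⟩, ← hV2eq _ j hne]
    ring
  have hinjW : ∀ a ∈ Finset.univ.erase f, ∀ b ∈ Finset.univ.erase f, W2 a = W2 b → a = b := by
    intro a ha b hb h
    have hna : a ≠ f := (Finset.mem_erase.mp ha).1
    have hnb : b ≠ f := (Finset.mem_erase.mp hb).1
    rw [hW2eq a hna, hW2eq b hnb] at h
    exact congrArg Subtype.val (inj' h)
  have hWimage : ∀ i : N, (∃ k, win' k = i) →
      i ∈ (Finset.univ.erase f).image W2 := by
    rintro i ⟨k, hk⟩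
    apply Finset.mem_image.mpr
    refine ⟨k.val, Finset.mem_erase.mpr ⟨k.prop, Finset.mem_univ _⟩, ?_⟩
    rw [hW2eq k.val k.prop, ← hk]
  have hβ2 : ∑ j ∈ Finset.univ.erase f, z (W2 j) = ∑ i, z i := by
    have himg : ∑ i ∈ (Finset.univ.erase f).image W2, z i
        = ∑ j ∈ Finset.univ.erase f, z (W2 j) := Finset.sum_image hinjW
    rw [← himg]
    apply Finset.sum_subset
    · intro i _; exact Finset.mem_univ i
    · intro i _ hni
      apply hz_lose
      intro hcon
      exact hni (hWimage i hcon)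
  have hβ : ∑ j ∈ Finset.univ.erase f, V2 (W2 j) j
      = (∑ i, z i) + ∑ j ∈ Finset.univ.erase f, P2 j := by
    rw [Finset.sum_congr rfl hβpoint, Finset.sum_add_distrib, hβ2]
  -- gamma
  have hγ2 : ∑ j ∈ Finset.univ.erase f, y (W2 j) ≤ ∑ i, y i := by
    have himg : ∑ i ∈ (Finset.univ.erase f).image W2, y i
        = ∑ j ∈ Finset.univ.erase f, y (W2 j) := Finset.sum_image hinjW
    rw [← himg]
    apply Finset.sum_le_sum_of_subset_of_nonneg
    · intro i _; exact Finset.mem_univ i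
    · intro i _ _; exact hy0 i
  have hγ3 : ∑ j ∈ Finset.univ.erase f, p j = (∑ j, p j) - p f := by
    have := Finset.sum_erase_add Finset.univ p (Finset.mem_univ f)
    linarith
  have hγ : ∑ j ∈ Finset.univ.erase f, V2 (W2 j) j ≤ (∑ i, y i) + ((∑ j, p j) - p f) := by
    have h1 : ∑ j ∈ Finset.univ.erase f, V2 (W2 j) j
        ≤ ∑ j ∈ Finset.univ.erase f, (y (W2 j) + p j) :=
      Finset.sum_le_sum (fun j _ => hyfeas (W2 j) j)
    rw [Finset.sum_add_distrib] at h1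
    rw [← hγ3]
    exact le_trans h1 (add_le_add_left hγ2 _)
  -- delta
  have hδ : ∑ i, y i = (∑ i, u i) - min (u t) c := by
    rw [hydef, Finset.sum_update_of_mem (Finset.mem_univ t)]
    have h1 : ∑ i ∈ Finset.univ.erase t, u i = (∑ i, u i) - u t := by
      have := Finset.sum_erase_add Finset.univ u (Finset.mem_univ t)
      linarith
    rw [← Finset.erase_eq, h1]
    rcases le_total (u t) c with h | h
    · rw [min_eq_left h, max_eq_left (by linarith)]
      ring
    · rw [min_eq_right h, max_eq_right (by linarith)]
      ring
  -- epsilon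
  have hε : ∑ i, u i = (∑ j, v (win j) j) - ∑ j, p j := by
    have hinjw : ∀ a ∈ Finset.univ, ∀ b ∈ Finset.univ, win a = win b → a = b :=
      fun a _ b _ h => inj h
    have himg : ∑ i ∈ Finset.univ.image win, u i = ∑ j ∈ Finset.univ, u (win j) :=
      Finset.sum_image hinjw
    have h1 : ∑ i, u i = ∑ i ∈ Finset.univ.image win, u i := by
      symm
      apply Finset.sum_subset
      · intro i _; exact Finset.mem_univ i
      · intro i _ hni
        apply hu_lose
        rintro ⟨k, hk⟩
        exact hni (Finset.mem_image.mpr ⟨k, Finset.mem_univ _, hk⟩)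
    rw [h1, himg]
    have h2 : ∀ j ∈ Finset.univ, u (win j) = v (win j) j - p j := fun j _ => hu_eq j
    rw [Finset.sum_congr rfl h2, Finset.sum_sub_distrib]
  -- conclude
  rw [← hzw]
  linarith [hval, hα2, hα3, hα4, hzsum, hβ, hγ, hδ, hε]
end

section
/- Let m ≥ 1 and ε > 0, and consider the unit-demand market with items 1,…,m and buyers b_0, b_1,…,b_m, where: b_0 values item 1 at 1 and all other items at 0; for 1 ≤ i ≤ m−1, buyer b_i values items i and i+1 at 1 + iε and all other items at 0; and buyer b_m values item m at 1 + mε and all other items at 0. Then every Walrasian equilibrium of this market has revenue Σ_j p_j ≥ m, and the allocation win(j) = b_j for every item j together with prices p_j = 1 for every item j is a Walrasian equilibrium with revenue exactly m; hence the minimal Walrasian revenue of this market is m. -/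
/-- Items `0, …, m-1` stand for items `1, …, m` and buyers `0, …, m` stand for
`b₀, …, b_m`.  Buyer `b₀` values item `1` at `1`; buyer `b_i` (`1 ≤ i ≤ m-1`)
values items `i` and `i+1` at `1 + i·ε`; buyer `b_m` values item `m` at
`1 + m·ε`; all other values are `0`.  Every Walrasian equilibrium of this
unit-demand market has revenue at least `m`, and allocating item `i` to buyer
`b_i` at price `1` is a Walrasian equilibrium of revenue exactly `m`; hence the
minimal Walrasian revenue of this market is `m`. -/
theorem minimal_walrasian_revenue_example (m : ℕ) (hm : 1 ≤ m) (ε : ℝ)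
    (hε : 0 < ε)
    (v : Fin (m + 1) → Fin m → ℝ)
    (hv : ∀ i j, v i j =
      if (i : ℕ) = 0 then (if (j : ℕ) = 0 then 1 else 0)
      else if (j : ℕ) = (i : ℕ) - 1 ∨ (j : ℕ) = (i : ℕ) then 1 + (i : ℕ) * ε
      else 0) :
    (∀ (win : Fin m → Fin (m + 1)) (p : Fin m → ℝ),
        IsWE v win p → (m : ℝ) ≤ ∑ j, p j) ∧
    IsWE v (fun j => Fin.succ j) (fun _ => 1) ∧
    (∑ _j : Fin m, (1 : ℝ)) = m := by
  refine ⟨?_, ?_, ?_⟩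
  · rintro win p ⟨inj, hp, hir, henvy, hun⟩
    -- an upper bound on every value
    have hub : ∀ (i : Fin (m+1)) (j : Fin m), v i j ≤ 1 + (i : ℕ) * ε := by
      intro i j
      have h0 : (0:ℝ) ≤ (i : ℕ) * ε := by positivity
      rw [hv]
      split_ifs <;> linarith
    -- who can value an item positively
    have hpos : ∀ j : Fin m, 0 < p j →
        ((win j : ℕ) = (j : ℕ) ∨ (win j : ℕ) = (j : ℕ) + 1) := by
      intro j hpj
      have h1 := hir j
      have hv1 : 0 < v (win j) j := by linarith
      rw [hv (win j) j] at hv1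
      split_ifs at hv1 with h2 h3 h4
      · left; omega
      · linarith
      · rcases h4 with h4 | h4
        · right; omega
        · left; omega
      · linarith
    -- there is an unallocated buyer
    have hex : ∃ i, ∀ j, win j ≠ i := by
      by_contra h
      push_neg at h
      have hsurj : Function.Surjective win := fun i => h i
      have := Fintype.card_le_of_surjective win hsurj
      simp at this
    obtain ⟨i₀, hi₀⟩ := hex
    -- the unallocated buyer is buyer 0
    have hi0 : (i₀ : ℕ) = 0 := by
      by_contra h0
      have h1 : 1 ≤ (i₀ : ℕ) := Nat.one_le_iff_ne_zero.mpr h0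
      have h2 : (i₀ : ℕ) ≤ m := Nat.lt_succ_iff.mp i₀.isLt
      set j₀ : Fin m := ⟨(i₀ : ℕ) - 1, by omega⟩ with hj₀
      have hvj : v i₀ j₀ = 1 + (i₀ : ℕ) * ε := by
        rw [hv, if_neg h0, if_pos (Or.inl rfl)]
      have hple : (1:ℝ) + (i₀ : ℕ) * ε ≤ p j₀ := hvj ▸ hun i₀ hi₀ j₀
      have hε0 : (0:ℝ) ≤ (i₀ : ℕ) * ε := by positivity
      have hppos : 0 < p j₀ := by linarith
      have hw := hpos j₀ hppos
      have hwne : (win j₀ : ℕ) ≠ (i₀ : ℕ) := fun h => hi₀ j₀ (Fin.ext h)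
      have hj₀v : (j₀ : ℕ) = (i₀ : ℕ) - 1 := rfl
      have hwval : (win j₀ : ℕ) = (i₀ : ℕ) - 1 := by omega
      have hlt : ((win j₀ : ℕ) : ℝ) < ((i₀ : ℕ) : ℝ) := by
        exact_mod_cast (by omega : (win j₀ : ℕ) < (i₀ : ℕ))
      have := hub (win j₀) j₀
      have hirj := hir j₀
      nlinarith
    -- main induction: every price is at least 1 and item j goes to buyer j+1
    have key : ∀ j : ℕ, ∀ hj : j < m, 1 ≤ p ⟨j, hj⟩ ∧ (win ⟨j, hj⟩ : ℕ) = j + 1 := by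
      intro j
      induction j with
      | zero =>
        intro hj
        have hp0 : (1:ℝ) ≤ p ⟨0, hj⟩ := by
          have h1 := hun i₀ hi₀ ⟨0, hj⟩
          rw [hv, if_pos hi0, if_pos rfl] at h1
          exact h1
        refine ⟨hp0, ?_⟩
        have hw := hpos ⟨0, hj⟩ (by linarith)
        rcases hw with h | h
        · exfalso
          apply hi₀ ⟨0, hj⟩
          apply Fin.ext
          simp only [Fin.val_mk] at h
          omega
        · simpa using h
      | succ j ih =>
        intro hj
        have hj' : j < m := by omega
        obtain ⟨hpj, hwj⟩ := ih hj'
        have henv := henvy ⟨j, hj'⟩ ⟨j+1, hj⟩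
        have hv1 : v (win ⟨j, hj'⟩) ⟨j+1, hj⟩ = 1 + ((win ⟨j, hj'⟩ : ℕ)) * ε := by
          rw [hv, if_neg (by omega), if_pos (by right; simp only [Fin.val_mk]; omega)]
        have hv2 : v (win ⟨j, hj'⟩) ⟨j, hj'⟩ = 1 + ((win ⟨j, hj'⟩ : ℕ)) * ε := by
          rw [hv, if_neg (by omega), if_pos (by left; simp only [Fin.val_mk]; omega)]
        rw [hv1, hv2] at henv
        have hp1 : (1:ℝ) ≤ p ⟨j+1, hj⟩ := by linarith
        refine ⟨hp1, ?_⟩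
        have hw := hpos ⟨j+1, hj⟩ (by linarith)
        rcases hw with h | h
        · exfalso
          have heq : win ⟨j+1, hj⟩ = win ⟨j, hj'⟩ := by
            apply Fin.ext
            simp only [Fin.val_mk] at h
            omega
          have := inj heq
          rw [Fin.ext_iff] at this
          simp only [Fin.val_mk] at this
          omega
        · simpa using h
    have hall : ∀ j : Fin m, (1:ℝ) ≤ p j := by
      intro j
      have := (key j.1 j.2).1
      simpa using this
    calc (m:ℝ) = ∑ _j : Fin m, (1:ℝ) := by simp
      _ ≤ ∑ j, p j := Finset.sum_le_sum fun j _ => hall j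
  · refine ⟨fun a b h => Fin.succ_injective _ h, fun j => zero_le_one, ?_, ?_, ?_⟩
    · intro j
      show (0:ℝ) ≤ v (Fin.succ j) j - 1
      have hvs : v (Fin.succ j) j = 1 + ((Fin.succ j : ℕ)) * ε := by
        rw [hv, if_neg (by simp), if_pos (by left; simp)]
      have h0 : (0:ℝ) ≤ ((Fin.succ j : ℕ)) * ε := by positivity
      rw [hvs]; linarith
    · intro j k
      show v (Fin.succ j) k - 1 ≤ v (Fin.succ j) j - 1
      have hvs : v (Fin.succ j) j = 1 + ((Fin.succ j : ℕ)) * ε := by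
        rw [hv, if_neg (by simp), if_pos (by left; simp)]
      have h0 : (0:ℝ) ≤ ((Fin.succ j : ℕ)) * ε := by positivity
      have hvk : v (Fin.succ j) k ≤ 1 + ((Fin.succ j : ℕ)) * ε := by
        rw [hv]
        split_ifs <;> linarith
      rw [hvs]; linarith
    · intro i hi j
      have hi0 : (i : ℕ) = 0 := by
        by_contra h0
        have h1 : (i : ℕ) ≤ m := Nat.lt_succ_iff.mp i.isLt
        have h2 : 1 ≤ (i : ℕ) := Nat.one_le_iff_ne_zero.mpr h0
        exact hi ⟨(i : ℕ) - 1, by omega⟩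
          (Fin.ext (by simp only [Fin.val_succ, Fin.val_mk]; omega))
      rw [hv, if_pos hi0]
      split_ifs <;> norm_num
  · simp
end

section
/- Consider a first price auction for a single item among a finite set N of at least two buyers with pairwise distinct nonnegative valuations v_i, and let w be the buyer with the highest valuation. A bid profile assigns to each buyer i a bid b_i with 0 ≤ b_i ≤ v_i (conservative bidding); the winner is the buyer with the highest bid, where ties among highest bidders are broken in favor of the tied buyer with the highest valuation; the winner's utility is v_i − b_i and every other buyer's utility is 0. Suppose the bid profile is a pure Nash equilibrium: no buyer i can strictly increase her utility by unilaterally changing her bid to any value c with 0 ≤ c ≤ v_i. Then the winner is w and the winning bid equals the second-highest valuation max_{i ≠ w} v_i. -/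
/-- Buyer `i` wins the single-item first price auction with valuations `v` and
bids `b`: every other buyer either bids strictly less, or bids the same and has
a strictly smaller valuation (ties among highest bidders are broken in favor of
the tied buyer with the highest valuation). -/
def Wins {N : Type*} (v b : N → ℝ) (i : N) : Prop :=
  ∀ k, k ≠ i → b k < b i ∨ (b k = b i ∧ v k < v i)

open scoped Classical in
/-- Quasilinear utility of buyer `i` in the first price auction: `v i - b i` if
`i` wins, and `0` otherwise. -/
noncomputable def fpaUtil {N : Type*} (v b : N → ℝ) (i : N) : ℝ :=
  if Wins v b i then v i - b i else 0

/-- In a first price auction for a single item among at least two buyers with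
pairwise distinct nonnegative valuations, in every conservative pure Nash
equilibrium the buyer `w` with the highest valuation wins, and the winning bid
equals the second-highest valuation. -/
theorem first_price_conservative_equilibrium {N : Type*} [Fintype N]
    [DecidableEq N] (hN : 2 ≤ Fintype.card N)
    (v : N → ℝ) (hv : ∀ i, 0 ≤ v i) (hinj : Function.Injective v)
    (w : N) (hw : ∀ i, v i ≤ v w)
    (b : N → ℝ) (hb : ∀ i, 0 ≤ b i ∧ b i ≤ v i)
    (hNE : ∀ (i : N) (c : ℝ), 0 ≤ c → c ≤ v i →
        fpaUtil v (Function.update b i c) i ≤ fpaUtil v b i) :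
    Wins v b w ∧
      b w = (Finset.univ.erase w).sup'
        (by
          rw [← Finset.card_pos, Finset.card_erase_of_mem (Finset.mem_univ w),
            Finset.card_univ]
          omega) v := by
  classical
  have hne : (Finset.univ.erase w).Nonempty := by
    rw [← Finset.card_pos, Finset.card_erase_of_mem (Finset.mem_univ w),
      Finset.card_univ]
    omega
  obtain ⟨j, hjmem, hjs⟩ := Finset.exists_mem_eq_sup' hne v
  set s := (Finset.univ.erase w).sup' hne v with hsdef
  have hjw : j ≠ w := (Finset.mem_erase.mp hjmem).1
  have hvlt : ∀ k, k ≠ w → v k < v w := fun k hk =>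
    lt_of_le_of_ne (hw k) fun h => hk (hinj h)
  have hsvj : s = v j := hjs
  have hslt : s < v w := hsvj ▸ hvlt j hjw
  have hs0 : 0 ≤ s := hsvj ▸ hv j
  have hsup : ∀ k, k ≠ w → v k ≤ s := fun k hk =>
    Finset.le_sup' v (Finset.mem_erase.mpr ⟨hk, Finset.mem_univ k⟩)
  -- w deviating to bid s wins
  have hwinS : Wins v (Function.update b w s) w := by
    intro k hk
    rw [Function.update_self, Function.update_of_ne hk]
    rcases lt_or_eq_of_le (le_trans (hb k).2 (hsup k hk)) with h | h
    · exact Or.inl h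
    · exact Or.inr ⟨h, hvlt k hk⟩
  have hdev : v w - s ≤ fpaUtil v b w := by
    have := hNE w s hs0 (le_of_lt hslt)
    rwa [fpaUtil, if_pos hwinS, Function.update_self] at this
  have hwwin : Wins v b w := by
    by_contra h
    rw [fpaUtil, if_neg h] at hdev
    linarith
  refine ⟨hwwin, ?_⟩
  show b w = s
  have hble : b w ≤ s := by
    rw [fpaUtil, if_pos hwwin] at hdev
    linarith
  by_contra hne'
  have hbw : b w < s := lt_of_le_of_ne hble hne'
  set c := (b w + s) / 2 with hc
  have hb0 : 0 ≤ b w := (hb w).1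
  have hc0 : 0 ≤ c := by rw [hc]; linarith
  have hcs : c < s := by rw [hc]; linarith
  have hcgt : b w < c := by rw [hc]; linarith
  -- j wins with bid c
  have hjwin : Wins v (Function.update b j c) j := by
    intro k hk
    rw [Function.update_self, Function.update_of_ne hk]
    left
    rcases eq_or_ne k w with rfl | hkw
    · exact hcgt
    · rcases hwwin k hkw with h | h
      · linarith
      · linarith [h.1]
  have hjnowin : ¬ Wins v b j := by
    intro h
    rcases h w (Ne.symm hjw) with h' | h'
    · rcases hwwin j hjw with h'' | h''
      · linarith
      · linarith [h''.1]
    · exact absurd h'.2 (not_lt.mpr (le_of_lt (hvlt j hjw)))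
  have hcvj : c ≤ v j := by rw [← hsvj]; linarith
  have := hNE j c hc0 hcvj
  rw [fpaUtil, if_pos hjwin, Function.update_self, fpaUtil, if_neg hjnowin] at this
  linarith [hsvj]
end
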